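/- arXiv:math/0204276 — 12 statements merged into one kernel-verified Lean document; each statement's English description precedes it below -/
import Mathlib

section
/- Let N ≥ 1 and let a : ℤ → ℂ. Let T be the (N+1)×(N+1) complex Toeplitz matrix with entries T j k = a (j - k) for 0 ≤ j, k ≤ N. If T is normal (i.e., T * Tᴴ = Tᴴ * T, where Tᴴ is the conjugate transpose), then T is of type I or of type II; that is, either there exists α₀ ∈ ℂ with |α₀| = 1 such that a(-k) = α₀ * conj(a k) for all 1 ≤ k ≤ N, or there exists β₀ ∈ ℂ with |β₀| = 1 such that a(-k) = β₀ * a(N + 1 - k) for all 1 ≤ k ≤ N. -/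
open Matrix

open Finset ComplexConjugate in
private lemma ntz_conj_mul_self_eq_zero {u : ℂ} (h : u * conj u = 0) : u = 0 := by
  rw [Complex.mul_conj] at h
  have h2 : Complex.normSq u = 0 := by exact_mod_cast h
  exact Complex.normSq_eq_zero.mp h2

open Finset ComplexConjugate in
private lemma ntz_two_sq_zero {u v : ℂ} (h : u * conj u + v * conj v = 0) : u = 0 := by
  rw [Complex.mul_conj, Complex.mul_conj] at h
  have h2 : Complex.normSq u + Complex.normSq v = 0 := by exact_mod_cast h
  have h3 := Complex.normSq_nonneg u
  have h4 := Complex.normSq_nonneg v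
  have h5 : Complex.normSq u = 0 := by linarith
  exact Complex.normSq_eq_zero.mp h5

open Finset ComplexConjugate in
private lemma ntz_abs_one_of_mul_conj {u : ℂ} (h : u * conj u = 1) : ‖u‖ = 1 := by
  rw [Complex.mul_conj] at h
  have h2 : Complex.normSq u = 1 := by exact_mod_cast h
  have h3 : ‖u‖ ^ 2 = 1 := by rw [Complex.sq_norm]; exact h2
  nlinarith [norm_nonneg u]

open Finset ComplexConjugate in
private lemma ntz_one_add_mul_conj_ne_zero (c : ℂ) : 1 + c * conj c ≠ 0 := by
  rw [Complex.mul_conj]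
  intro h
  have h2 : (1 : ℝ) + Complex.normSq c = 0 := by exact_mod_cast h
  nlinarith [Complex.normSq_nonneg c]

open Finset ComplexConjugate in
private lemma ntz_conj_ne_zero {u : ℂ} (h : u ≠ 0) : conj u ≠ 0 := by
  intro h0
  apply h
  have := congrArg conj h0
  simpa using this

open Finset ComplexConjugate in
private lemma ntz_sum_shift (f : ℕ → ℂ) (n : ℕ) :
    ∑ s ∈ Finset.range (n+1), f (s+1)
      = ∑ s ∈ Finset.range (n+1), f s + f (n+1) - f 0 := by
  have h1 := Finset.sum_range_succ f (n+1)
  have h2 := Finset.sum_range_succ' f (n+1)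
  rw [h1] at h2
  linear_combination -h2

open Finset ComplexConjugate in
private lemma ntz_dichotomy (N : ℕ) (x w y z : ℤ → ℂ)
    (hw : ∀ p : ℤ, 1 ≤ p → p ≤ N → w p = conj (x (N + 1 - p)))
    (hz : ∀ p : ℤ, 1 ≤ p → p ≤ N → z p = conj (y (N + 1 - p)))
    (hkey : ∀ p q : ℤ, 1 ≤ p → p ≤ N → 1 ≤ q → q ≤ N →
      x p * conj (x q) + w p * conj (w q) = y p * conj (y q) + z p * conj (z q)) :
    (∃ α : ℂ, ‖α‖ = 1 ∧ ∀ p : ℤ, 1 ≤ p → p ≤ N → x p = α * y p) ∨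
    (∃ β : ℂ, ‖β‖ = 1 ∧ ∀ p : ℤ, 1 ≤ p → p ≤ N → x p = β * z p) := by
  by_cases hy0 : ∀ p : ℤ, 1 ≤ p → p ≤ N → y p = 0
  · left
    refine ⟨1, by simp, fun p hp1 hpN => ?_⟩
    have hk := hkey p p hp1 hpN hp1 hpN
    rw [hy0 p hp1 hpN, hz p hp1 hpN, hy0 (N+1-p) (by omega) (by omega)] at hk
    simp only [_root_.map_zero, mul_zero, zero_mul, add_zero] at hk
    rw [ntz_two_sq_zero hk, hy0 p hp1 hpN, mul_zero]
  push_neg at hy0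
  obtain ⟨p₀, hp₀1, hp₀N, hy₀⟩ := hy0
  by_cases hind : ∃ p₁ : ℤ, (1 ≤ p₁ ∧ p₁ ≤ N) ∧ ∃ q₁ : ℤ, (1 ≤ q₁ ∧ q₁ ≤ N) ∧
      y p₁ * z q₁ ≠ y q₁ * z p₁
  · -- "independent" case
    obtain ⟨p₁, ⟨h11, h12⟩, q₁, ⟨h21, h22⟩, hD⟩ := hind
    have e11 := hkey p₁ p₁ h11 h12 h11 h12
    have e12 := hkey p₁ q₁ h11 h12 h21 h22
    have e21 := hkey q₁ p₁ h21 h22 h11 h12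
    have e22 := hkey q₁ q₁ h21 h22 h21 h22
    have hDD : (x p₁ * w q₁ - x q₁ * w p₁) * conj (x p₁ * w q₁ - x q₁ * w p₁)
        = (y p₁ * z q₁ - y q₁ * z p₁) * conj (y p₁ * z q₁ - y q₁ * z p₁) := by
      simp only [_root_.map_sub, _root_.map_mul]
      linear_combination (x q₁ * conj (x q₁) + w q₁ * conj (w q₁)) * e11
        + (y p₁ * conj (y p₁) + z p₁ * conj (z p₁)) * e22
        - (x q₁ * conj (x p₁) + w q₁ * conj (w p₁)) * e12
        - (y p₁ * conj (y q₁) + z p₁ * conj (z q₁)) * e21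
    have hD0 : y p₁ * z q₁ - y q₁ * z p₁ ≠ 0 := sub_ne_zero.mpr hD
    have hD' : x p₁ * w q₁ - x q₁ * w p₁ ≠ 0 := by
      intro h0
      rw [h0, zero_mul] at hDD
      exact hD0 (ntz_conj_mul_self_eq_zero hDD.symm)
    have hΔ : conj (x p₁) * conj (w q₁) - conj (x q₁) * conj (w p₁) ≠ 0 := by
      have : conj (x p₁) * conj (w q₁) - conj (x q₁) * conj (w p₁)
          = conj (x p₁ * w q₁ - x q₁ * w p₁) := by simp only [_root_.map_sub, _root_.map_mul]
      rw [this]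
      exact ntz_conj_ne_zero hD'
    obtain ⟨aa, haa⟩ : ∃ aa : ℂ, aa = (conj (y p₁) * conj (w q₁) - conj (y q₁) * conj (w p₁))
        / (conj (x p₁) * conj (w q₁) - conj (x q₁) * conj (w p₁)) := ⟨_, rfl⟩
    obtain ⟨bb, hbb⟩ : ∃ bb : ℂ, bb = (conj (z p₁) * conj (w q₁) - conj (z q₁) * conj (w p₁))
        / (conj (x p₁) * conj (w q₁) - conj (x q₁) * conj (w p₁)) := ⟨_, rfl⟩
    have hx : ∀ p : ℤ, 1 ≤ p → p ≤ N → x p = aa * y p + bb * z p := by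
      intro p hp1 hpN
      have h1 := hkey p p₁ hp1 hpN h11 h12
      have h2 := hkey p q₁ hp1 hpN h21 h22
      have hstep : x p * (conj (x p₁) * conj (w q₁) - conj (x q₁) * conj (w p₁))
          = y p * (conj (y p₁) * conj (w q₁) - conj (y q₁) * conj (w p₁))
            + z p * (conj (z p₁) * conj (w q₁) - conj (z q₁) * conj (w p₁)) := by
        linear_combination conj (w q₁) * h1 - conj (w p₁) * h2
      rw [haa, hbb, div_mul_eq_mul_div, div_mul_eq_mul_div, ← add_div,
        eq_div_iff hΔ]
      linear_combination hstep
    have hwp : ∀ p : ℤ, 1 ≤ p → p ≤ N → w p = conj aa * z p + conj bb * y p := by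
      intro p hp1 hpN
      rw [hw p hp1 hpN, hx (N+1-p) (by omega) (by omega)]
      simp only [_root_.map_add, _root_.map_mul]
      rw [← hz p hp1 hpN]
      have h5 : conj (z (N+1-p)) = y p := by
        rw [hz (N+1-p) (by omega) (by omega)]
        rw [show (N:ℤ)+1-(N+1-p) = p by ring]
        simp
      rw [h5]
    have hEE : ∀ p q : ℤ, 1 ≤ p → p ≤ N → 1 ≤ q → q ≤ N →
        (aa * y p + bb * z p) * (conj aa * conj (y q) + conj bb * conj (z q))
          + (conj aa * z p + conj bb * y p) * (aa * conj (z q) + bb * conj (y q))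
          = y p * conj (y q) + z p * conj (z q) := by
      intro p q hp1 hpN hq1 hqN
      have h := hkey p q hp1 hpN hq1 hqN
      rw [hx p hp1 hpN, hwp p hp1 hpN, hx q hq1 hqN, hwp q hq1 hqN] at h
      simpa only [_root_.map_add, _root_.map_mul, Complex.conj_conj] using h
    have g11 := hEE p₁ p₁ h11 h12 h11 h12
    have g12 := hEE p₁ q₁ h11 h12 h21 h22
    have g21 := hEE q₁ p₁ h21 h22 h11 h12
    have g22 := hEE q₁ q₁ h21 h22 h21 h22
    have hDcD : (y p₁ * z q₁ - y q₁ * z p₁)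
        * (conj (y p₁) * conj (z q₁) - conj (y q₁) * conj (z p₁)) ≠ 0 := by
      apply mul_ne_zero hD0
      have : conj (y p₁) * conj (z q₁) - conj (y q₁) * conj (z p₁)
          = conj (y p₁ * z q₁ - y q₁ * z p₁) := by simp only [_root_.map_sub, _root_.map_mul]
      rw [this]; exact ntz_conj_ne_zero hD0
    have hab : aa * conj bb = 0 := by
      have hcomb : (aa * conj bb) * ((y p₁ * z q₁ - y q₁ * z p₁)
          * (conj (y p₁) * conj (z q₁) - conj (y q₁) * conj (z p₁))) = 0 := by
        linear_combination (-(z q₁ * conj (y q₁))/2) * g11 + ((z q₁ * conj (y p₁))/2) * g12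
          + ((z p₁ * conj (y q₁))/2) * g21 - ((z p₁ * conj (y p₁))/2) * g22
      exact (mul_eq_zero.mp hcomb).resolve_right hDcD
    have hs1 : aa * conj aa + bb * conj bb = 1 := by
      have hcomb : (aa * conj aa + bb * conj bb - 1) * ((y p₁ * z q₁ - y q₁ * z p₁)
          * (conj (y p₁) * conj (z q₁) - conj (y q₁) * conj (z p₁))) = 0 := by
        linear_combination (y q₁ * conj (y q₁)) * g11 - (y q₁ * conj (y p₁)) * g12
          - (y p₁ * conj (y q₁)) * g21 + (y p₁ * conj (y p₁)) * g22
      have := (mul_eq_zero.mp hcomb).resolve_right hDcD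
      linear_combination this
    rcases mul_eq_zero.mp hab with ha0 | hb0
    · right
      have hbb1 : bb * conj bb = 1 := by rw [ha0] at hs1; simpa using hs1
      exact ⟨bb, ntz_abs_one_of_mul_conj hbb1,
        fun p hp1 hpN => by rw [hx p hp1 hpN, ha0]; ring⟩
    · have hb0' : bb = 0 := by
        have := congrArg conj hb0; simpa using this
      left
      have haa1 : aa * conj aa = 1 := by rw [hb0'] at hs1; simpa using hs1
      exact ⟨aa, ntz_abs_one_of_mul_conj haa1,
        fun p hp1 hpN => by rw [hx p hp1 hpN, hb0']; ring⟩
  · -- "dependent" case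
    push_neg at hind
    left
    obtain ⟨c, hc⟩ : ∃ c : ℂ, c = z p₀ / y p₀ := ⟨_, rfl⟩
    have hzc : ∀ p : ℤ, 1 ≤ p → p ≤ N → z p = c * y p := by
      intro p hp1 hpN
      have h := hind p ⟨hp1, hpN⟩ p₀ ⟨hp₀1, hp₀N⟩
      rw [hc, div_mul_eq_mul_div, eq_div_iff hy₀]
      linear_combination -h
    have hK := ntz_one_add_mul_conj_ne_zero c
    have hkey2 : ∀ p q : ℤ, 1 ≤ p → p ≤ N → 1 ≤ q → q ≤ N →
        x p * conj (x q) + w p * conj (w q) = (1 + c * conj c) * (y p * conj (y q)) := by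
      intro p q hp1 hpN hq1 hqN
      have h := hkey p q hp1 hpN hq1 hqN
      rw [hzc p hp1 hpN, hzc q hq1 hqN] at h
      simp only [_root_.map_mul] at h
      linear_combination h
    have hrank : ∀ p q : ℤ, 1 ≤ p → p ≤ N → 1 ≤ q → q ≤ N → x p * w q = x q * w p := by
      intro p q hp1 hpN hq1 hqN
      have g11 := hkey2 p p hp1 hpN hp1 hpN
      have g12 := hkey2 p q hp1 hpN hq1 hqN
      have g21 := hkey2 q p hq1 hqN hp1 hpN
      have g22 := hkey2 q q hq1 hqN hq1 hqN
      have h0 : (x p * w q - x q * w p) * conj (x p * w q - x q * w p) = 0 := by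
        simp only [_root_.map_sub, _root_.map_mul]
        linear_combination (x q * conj (x q) + w q * conj (w q)) * g11
          + ((1 + c * conj c) * (y p * conj (y p))) * g22
          - (x q * conj (x p) + w q * conj (w p)) * g12
          - ((1 + c * conj c) * (y p * conj (y q))) * g21
      exact sub_eq_zero.mp (ntz_conj_mul_self_eq_zero h0)
    have hyy : y p₀ * conj (y p₀) ≠ 0 := mul_ne_zero hy₀ (ntz_conj_ne_zero hy₀)
    have hxp₀ : x p₀ ≠ 0 := by
      intro hx0
      by_cases hw0 : w p₀ = 0
      · have h := hkey2 p₀ p₀ hp₀1 hp₀N hp₀1 hp₀N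
        rw [hx0, hw0] at h
        simp only [zero_mul, add_zero] at h
        exact (mul_ne_zero hK hyy) h.symm
      · have hxall : ∀ p : ℤ, 1 ≤ p → p ≤ N → x p = 0 := by
          intro p hp1 hpN
          have h := hrank p p₀ hp1 hpN hp₀1 hp₀N
          rw [hx0, zero_mul] at h
          exact (mul_eq_zero.mp h).resolve_right hw0
        apply hw0
        rw [hw p₀ hp₀1 hp₀N, hxall (N+1-p₀) (by omega) (by omega)]
        simp
    obtain ⟨μ, hμ⟩ : ∃ μ : ℂ, μ = w p₀ / x p₀ := ⟨_, rfl⟩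
    have hwμ : ∀ p : ℤ, 1 ≤ p → p ≤ N → w p = μ * x p := by
      intro p hp1 hpN
      have h := hrank p p₀ hp1 hpN hp₀1 hp₀N
      rw [hμ, div_mul_eq_mul_div, eq_div_iff hxp₀]
      linear_combination -h
    have h1μ : (1 : ℂ) + μ * conj μ ≠ 0 := ntz_one_add_mul_conj_ne_zero μ
    obtain ⟨lam, hlam⟩ : ∃ l : ℂ,
        l = (1 + c * conj c) * conj (y p₀) / (conj (x p₀) * (1 + μ * conj μ)) := ⟨_, rfl⟩
    have hden : conj (x p₀) * (1 + μ * conj μ) ≠ 0 :=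
      mul_ne_zero (ntz_conj_ne_zero hxp₀) h1μ
    have hxl : ∀ p : ℤ, 1 ≤ p → p ≤ N → x p = lam * y p := by
      intro p hp1 hpN
      have h := hkey2 p p₀ hp1 hpN hp₀1 hp₀N
      rw [hwμ p hp1 hpN, hwμ p₀ hp₀1 hp₀N] at h
      simp only [_root_.map_mul] at h
      rw [hlam, div_mul_eq_mul_div, eq_div_iff hden]
      linear_combination h
    have hl1 : lam * conj lam = 1 := by
      have h := hkey2 p₀ p₀ hp₀1 hp₀N hp₀1 hp₀N
      have hw0 : w p₀ = conj lam * c * y p₀ := by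
        rw [hw p₀ hp₀1 hp₀N, hxl (N+1-p₀) (by omega) (by omega)]
        simp only [_root_.map_mul]
        rw [← hz p₀ hp₀1 hp₀N, hzc p₀ hp₀1 hp₀N]
        ring
      rw [hxl p₀ hp₀1 hp₀N, hw0] at h
      simp only [_root_.map_mul, Complex.conj_conj] at h
      have hfac : (lam * conj lam - 1) * ((1 + c * conj c) * (y p₀ * conj (y p₀))) = 0 := by
        linear_combination h
      have := (mul_eq_zero.mp hfac).resolve_right (mul_ne_zero hK hyy)
      linear_combination this
    exact ⟨lam, ntz_abs_one_of_mul_conj hl1, hxl⟩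

open Finset ComplexConjugate

theorem normal_toeplitz_typeI_or_typeII (N : ℕ) (hN : 1 ≤ N) (a : ℤ → ℂ)
    (T : Matrix (Fin (N + 1)) (Fin (N + 1)) ℂ)
    (hT : ∀ j k : Fin (N + 1), T j k = a ((j : ℤ) - (k : ℤ)))
    (hnormal : T * Tᴴ = Tᴴ * T) :
    (∃ α₀ : ℂ, ‖α₀‖ = 1 ∧
      ∀ k : ℤ, 1 ≤ k → k ≤ N → a (-k) = α₀ * (starRingEnd ℂ) (a k)) ∨
    (∃ β₀ : ℂ, ‖β₀‖ = 1 ∧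
      ∀ k : ℤ, 1 ≤ k → k ≤ N → a (-k) = β₀ * a ((N : ℤ) + 1 - k)) := by
  have hent : ∀ j k : ℤ, 0 ≤ j → j ≤ N → 0 ≤ k → k ≤ N →
      (∑ s ∈ Finset.range (N+1), a (j - s) * conj (a (k - s)))
        = ∑ s ∈ Finset.range (N+1), conj (a (s - j)) * a (s - k) := by
    intro j k hj0 hjN hk0 hkN
    have hjlt : j.toNat < N + 1 := by omega
    have hklt : k.toNat < N + 1 := by omega
    have h := congrFun (congrFun hnormal ⟨j.toNat, hjlt⟩) ⟨k.toNat, hklt⟩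
    rw [Matrix.mul_apply, Matrix.mul_apply] at h
    simp only [Matrix.conjTranspose_apply, hT, ← starRingEnd_apply] at h
    have hjj : (((⟨j.toNat, hjlt⟩ : Fin (N+1)) : ℕ) : ℤ) = j := by
      simp [Int.toNat_of_nonneg hj0]
    have hkk : (((⟨k.toNat, hklt⟩ : Fin (N+1)) : ℕ) : ℤ) = k := by
      simp [Int.toNat_of_nonneg hk0]
    rw [hjj, hkk] at h
    rw [← Fin.sum_univ_eq_sum_range (fun s : ℕ => a (j - (s:ℤ)) * conj (a (k - (s:ℤ)))) (N+1),
        ← Fin.sum_univ_eq_sum_range (fun s : ℕ => conj (a ((s:ℤ) - j)) * a ((s:ℤ) - k)) (N+1)]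
    exact h
  have key : ∀ p q : ℤ, 1 ≤ p → p ≤ N → 1 ≤ q → q ≤ N →
      conj (a (-p)) * a (-q) + a (p-(N+1)) * conj (a (q-(N+1)))
        = a p * conj (a q) + conj (a (N+1-p)) * a (N+1-q) := by
    intro p q hp1 hpN hq1 hqN
    have h1 := hent (p-1) (q-1) (by omega) (by omega) (by omega) (by omega)
    have h2 := hent p q (by omega) (by omega) (by omega) (by omega)
    have hf := ntz_sum_shift (fun s : ℕ => a (p - (s:ℤ)) * conj (a (q - (s:ℤ)))) N
    have hg := ntz_sum_shift (fun s : ℕ => conj (a ((s:ℤ) - p)) * a ((s:ℤ) - q)) N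
    have hfe : (∑ s ∈ Finset.range (N+1), a ((p-1) - (s:ℤ)) * conj (a ((q-1) - (s:ℤ))))
        = ∑ s ∈ Finset.range (N+1), a (p - ((s:ℕ)+1 : ℤ)) * conj (a (q - ((s:ℕ)+1 : ℤ))) := by
      refine Finset.sum_congr rfl fun s _ => ?_
      ring_nf
    have hge : (∑ s ∈ Finset.range (N+1), conj (a ((s:ℤ) - (p-1))) * a ((s:ℤ) - (q-1)))
        = ∑ s ∈ Finset.range (N+1), conj (a (((s:ℕ)+1 : ℤ) - p)) * a (((s:ℕ)+1 : ℤ) - q) := by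
      refine Finset.sum_congr rfl fun s _ => ?_
      ring_nf
    rw [hfe, hge] at h1
    have hfe2 : (∑ s ∈ Finset.range (N+1), a (p - ((s:ℕ)+1 : ℤ)) * conj (a (q - ((s:ℕ)+1 : ℤ))))
        = ∑ s ∈ Finset.range (N+1),
            (fun s : ℕ => a (p - (s:ℤ)) * conj (a (q - (s:ℤ)))) (s+1) := by
      refine Finset.sum_congr rfl fun s _ => ?_
      push_cast
      ring_nf
    have hge2 : (∑ s ∈ Finset.range (N+1), conj (a (((s:ℕ)+1 : ℤ) - p)) * a (((s:ℕ)+1 : ℤ) - q))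
        = ∑ s ∈ Finset.range (N+1),
            (fun s : ℕ => conj (a ((s:ℤ) - p)) * a ((s:ℤ) - q)) (s+1) := by
      refine Finset.sum_congr rfl fun s _ => ?_
      push_cast
      ring_nf
    rw [hfe2, hge2, hf, hg] at h1
    simp only [Nat.cast_zero, Nat.cast_add, Nat.cast_one, sub_zero, zero_sub] at h1
    rw [h2] at h1
    linear_combination h1
  have main := ntz_dichotomy N (fun p => conj (a (-p))) (fun p => a (p - (N+1))) a
      (fun p => conj (a (N+1-p))) ?_ ?_ ?_
  · rcases main with ⟨α, hα1, hα⟩ | ⟨β, hβ1, hβ⟩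
    · left
      refine ⟨conj α, by rw [Complex.norm_conj]; exact hα1, fun k hk1 hkN => ?_⟩
      have h := congrArg conj (hα k hk1 hkN)
      simpa only [_root_.map_mul, Complex.conj_conj] using h
    · right
      refine ⟨conj β, by rw [Complex.norm_conj]; exact hβ1, fun k hk1 hkN => ?_⟩
      have h := congrArg conj (hβ k hk1 hkN)
      simpa only [_root_.map_mul, Complex.conj_conj] using h
  · intro p hp1 hpN
    rw [show (-((N:ℤ)+1-p)) = p - (N+1) by ring, Complex.conj_conj]
  · intro p hp1 hpN
    simp only
  · intro p q hp1 hpN hq1 hqN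
    simp only [Complex.conj_conj]
    linear_combination key p q hp1 hpN hq1 hqN
end

section
/- Let N ≥ 1 and let a : ℤ → ℝ. Let T be the (N+1)×(N+1) real Toeplitz matrix with entries T j k = a (j - k) for 0 ≤ j, k ≤ N. If T is normal (i.e., T * Tᵀ = Tᵀ * T), then T is of one of four types: symmetric (a(-k) = a k for all 1 ≤ k ≤ N), skew-symmetric up to the diagonal (a(-k) = -a k for all 1 ≤ k ≤ N), circulant (a(-k) = a(N + 1 - k) for all 1 ≤ k ≤ N), or skew-circulant (a(-k) = -a(N + 1 - k) for all 1 ≤ k ≤ N). -/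
open Complex

private lemma cross_zero (c d x : ℂ) (h : ((starRingEnd ℂ) c * d).im ≠ 0)
    (h1 : ((starRingEnd ℂ) c * x).re = 0) (h2 : ((starRingEnd ℂ) d * x).re = 0) :
    x = 0 := by
  have hδ : c.re * d.im - c.im * d.re ≠ 0 := by
    simp only [Complex.mul_im, Complex.conj_re, Complex.conj_im] at h
    intro hc; exact h (by linarith)
  have e1 : c.re * x.re + c.im * x.im = 0 := by
    simp only [Complex.mul_re, Complex.conj_re, Complex.conj_im] at h1
    linarith
  have e2 : d.re * x.re + d.im * x.im = 0 := by
    simp only [Complex.mul_re, Complex.conj_re, Complex.conj_im] at h2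
    linarith
  have hre : x.re * (c.re * d.im - c.im * d.re) = 0 := by
    linear_combination d.im * e1 - c.im * e2
  have him : x.im * (c.re * d.im - c.im * d.re) = 0 := by
    linear_combination c.re * e2 - d.re * e1
  exact Complex.ext ((mul_eq_zero.1 hre).resolve_right hδ)
    ((mul_eq_zero.1 him).resolve_right hδ)

private lemma quad_half (P : ℤ → Prop) (z w : ℤ → ℂ) (p₁ p₂ : ℤ) (h₁ : P p₁) (h₂ : P p₂)
    (hR1 : ∀ p q, P p → P q → ((starRingEnd ℂ) (z p) * z q).re = ((starRingEnd ℂ) (w p) * w q).re)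
    (hR2 : ∀ p q, P p → P q → (z p * z q).im = (w p * w q).im)
    (hD : ((starRingEnd ℂ) (z p₁) * z p₂).im ≠ 0)
    (hW : (starRingEnd ℂ) (w p₁) * w p₂ = (starRingEnd ℂ) (z p₁) * z p₂) :
    (∀ p, P p → w p = z p) ∨ (∀ p, P p → w p = -z p) := by
  have hz1 : z p₁ ≠ 0 := by intro h; apply hD; simp [h]
  have hz2 : z p₂ ≠ 0 := by intro h; apply hD; simp [h]
  have hz1c : (starRingEnd ℂ) (z p₁) ≠ 0 :=
    fun h => hz1 (by simpa using congrArg (starRingEnd ℂ) h)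
  have hn1 : (starRingEnd ℂ) (w p₁) * w p₁ = (starRingEnd ℂ) (z p₁) * z p₁ := by
    apply Complex.ext
    · exact (hR1 p₁ p₁ h₁ h₁).symm
    · rw [← Complex.normSq_eq_conj_mul_self, ← Complex.normSq_eq_conj_mul_self,
        Complex.ofReal_im, Complex.ofReal_im]
  have hw1ne : w p₁ ≠ 0 := by
    intro h
    apply hz1
    have h0 : ((Complex.normSq (z p₁) : ℝ) : ℂ) = 0 := by
      rw [Complex.normSq_eq_conj_mul_self, ← hn1, h, mul_zero]
    exact Complex.normSq_eq_zero.mp (by exact_mod_cast h0)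
  set lam := w p₁ / z p₁ with hlam
  have hw1 : w p₁ = lam * z p₁ := by
    rw [hlam]; field_simp
  have hunit : (starRingEnd ℂ) lam * lam = 1 := by
    have e : ((starRingEnd ℂ) lam * lam - 1) * ((starRingEnd ℂ) (z p₁) * z p₁) = 0 := by
      have h' := hn1
      rw [hw1, map_mul] at h'
      linear_combination h'
    rcases mul_eq_zero.1 e with h' | h'
    · linear_combination h'
    · exact absurd h' (mul_ne_zero hz1c hz1)
  have hw2 : w p₂ = lam * z p₂ := by
    have h' := hW
    rw [hw1, map_mul] at h'
    have e : (starRingEnd ℂ) (z p₁) * (w p₂ - lam * z p₂) = 0 := by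
      linear_combination lam * h' - ((starRingEnd ℂ) (z p₁) * w p₂) * hunit
    exact sub_eq_zero.mp ((mul_eq_zero.1 e).resolve_left hz1c)
  have key : ∀ p, P p → w p = lam * z p := by
    intro p hp
    have e1 : ((starRingEnd ℂ) (w p₁) * (w p - lam * z p)).re = 0 := by
      have e : (starRingEnd ℂ) (w p₁) * (w p - lam * z p)
          = (starRingEnd ℂ) (w p₁) * w p - (starRingEnd ℂ) (z p₁) * z p := by
        rw [hw1, map_mul]
        linear_combination (-((starRingEnd ℂ) (z p₁) * z p)) * hunit
      rw [e, Complex.sub_re, ← hR1 p₁ p h₁ hp, sub_self]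
    have e2 : ((starRingEnd ℂ) (w p₂) * (w p - lam * z p)).re = 0 := by
      have e : (starRingEnd ℂ) (w p₂) * (w p - lam * z p)
          = (starRingEnd ℂ) (w p₂) * w p - (starRingEnd ℂ) (z p₂) * z p := by
        rw [hw2, map_mul]
        linear_combination (-((starRingEnd ℂ) (z p₂) * z p)) * hunit
      rw [e, Complex.sub_re, ← hR1 p₂ p h₂ hp, sub_self]
    have him : ((starRingEnd ℂ) (w p₁) * w p₂).im ≠ 0 := by rw [hW]; exact hD
    exact sub_eq_zero.mp (cross_zero (w p₁) (w p₂) _ him e1 e2)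
  have h11 : ((lam ^ 2 - 1) * (z p₁ * z p₁)).im = 0 := by
    have r := hR2 p₁ p₁ h₁ h₁
    have e : (lam ^ 2 - 1) * (z p₁ * z p₁) = (lam * z p₁) * (lam * z p₁) - z p₁ * z p₁ := by ring
    rw [e, ← hw1, Complex.sub_im, ← r, sub_self]
  have h12 : ((lam ^ 2 - 1) * (z p₁ * z p₂)).im = 0 := by
    have r := hR2 p₁ p₂ h₁ h₂
    have e : (lam ^ 2 - 1) * (z p₁ * z p₂) = (lam * z p₁) * (lam * z p₂) - z p₁ * z p₂ := by ring
    rw [e, ← hw1, ← hw2, Complex.sub_im, ← r, sub_self]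
  have hmu : lam ^ 2 - 1 = 0 := by
    by_contra hmu
    apply hD
    have hxy : ((starRingEnd ℂ) ((lam ^ 2 - 1) * (z p₁ * z p₁)) * ((lam ^ 2 - 1) * (z p₁ * z p₂))).im = 0 := by
      simp only [Complex.mul_im, Complex.conj_re, Complex.conj_im, h11, h12]
      ring
    have e : (starRingEnd ℂ) ((lam ^ 2 - 1) * (z p₁ * z p₁)) * ((lam ^ 2 - 1) * (z p₁ * z p₂))
        = ((Complex.normSq (lam ^ 2 - 1) : ℝ) : ℂ) * ((Complex.normSq (z p₁) : ℝ) : ℂ)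
          * ((starRingEnd ℂ) (z p₁) * z p₂) := by
      rw [Complex.normSq_eq_conj_mul_self, Complex.normSq_eq_conj_mul_self]
      simp only [map_mul]
      ring
    rw [e, ← Complex.ofReal_mul, Complex.im_ofReal_mul] at hxy
    rcases mul_eq_zero.1 hxy with h' | h'
    · exact absurd h' (mul_ne_zero (fun hh => hmu (Complex.normSq_eq_zero.mp hh))
        (fun hh => hz1 (Complex.normSq_eq_zero.mp hh)))
    · exact h'
  rcases mul_eq_zero.1 (show (lam - 1) * (lam + 1) = 0 by linear_combination hmu) with h' | h'
  · left
    intro p hp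
    rw [key p hp, sub_eq_zero.mp h', one_mul]
  · right
    intro p hp
    rw [key p hp, show lam = -1 from eq_neg_of_add_eq_zero_left h', neg_one_mul]
private lemma quad_main (P : ℤ → Prop) (z w : ℤ → ℂ)
    (hR1 : ∀ p q, P p → P q → ((starRingEnd ℂ) (z p) * z q).re = ((starRingEnd ℂ) (w p) * w q).re)
    (hR2 : ∀ p q, P p → P q → (z p * z q).im = (w p * w q).im) :
    (∀ p, P p → w p = z p) ∨ (∀ p, P p → w p = -z p) ∨
    (∀ p, P p → w p = Complex.I * (starRingEnd ℂ) (z p)) ∨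
    (∀ p, P p → w p = -(Complex.I * (starRingEnd ℂ) (z p))) := by
  have hn : ∀ p, P p → (starRingEnd ℂ) (w p) * w p = (starRingEnd ℂ) (z p) * z p := by
    intro p hp
    apply Complex.ext
    · exact (hR1 p p hp hp).symm
    · rw [← Complex.normSq_eq_conj_mul_self, ← Complex.normSq_eq_conj_mul_self,
        Complex.ofReal_im, Complex.ofReal_im]
  have hnsq : ∀ p, P p → Complex.normSq (w p) = Complex.normSq (z p) := by
    intro p hp
    have := hn p hp
    rw [← Complex.normSq_eq_conj_mul_self, ← Complex.normSq_eq_conj_mul_self] at this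
    exact_mod_cast this
  by_cases hdeg : ∃ p q, P p ∧ P q ∧ ((starRingEnd ℂ) (z p) * z q).im ≠ 0
  · obtain ⟨p₁, p₂, h₁, h₂, hD⟩ := hdeg
    have hre := hR1 p₁ p₂ h₁ h₂
    have hn2 : Complex.normSq ((starRingEnd ℂ) (w p₁) * w p₂)
        = Complex.normSq ((starRingEnd ℂ) (z p₁) * z p₂) := by
      rw [map_mul, map_mul, Complex.normSq_conj, Complex.normSq_conj,
        hnsq p₁ h₁, hnsq p₂ h₂]
    have him2 : ((starRingEnd ℂ) (w p₁) * w p₂).im * ((starRingEnd ℂ) (w p₁) * w p₂).im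
        = ((starRingEnd ℂ) (z p₁) * z p₂).im * ((starRingEnd ℂ) (z p₁) * z p₂).im := by
      have h3 := Complex.normSq_apply ((starRingEnd ℂ) (w p₁) * w p₂)
      have h4 := Complex.normSq_apply ((starRingEnd ℂ) (z p₁) * z p₂)
      linear_combination hn2 - h3 + h4 + (((starRingEnd ℂ) (w p₁) * w p₂).re + ((starRingEnd ℂ) (z p₁) * z p₂).re) * hre
    have hcases := mul_self_eq_mul_self_iff.1 him2
    rcases hcases with hc | hc
    · have hW : (starRingEnd ℂ) (w p₁) * w p₂ = (starRingEnd ℂ) (z p₁) * z p₂ :=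
        Complex.ext (hR1 p₁ p₂ h₁ h₂).symm hc
      rcases quad_half P z w p₁ p₂ h₁ h₂ hR1 hR2 hD hW with h | h
      · exact Or.inl h
      · exact Or.inr (Or.inl h)
    · set w' : ℤ → ℂ := fun p => Complex.I * (starRingEnd ℂ) (w p) with hw'
      have hR1' : ∀ p q, P p → P q →
          ((starRingEnd ℂ) (z p) * z q).re = ((starRingEnd ℂ) (w' p) * w' q).re := by
        intro p q hp hq
        have e : (starRingEnd ℂ) (w' p) * w' q = w p * (starRingEnd ℂ) (w q) := by
          simp only [hw', map_mul, Complex.conj_conj, Complex.conj_I]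
          linear_combination (-(w p * (starRingEnd ℂ) (w q))) * Complex.I_sq
        rw [e, hR1 p q hp hq]
        simp only [Complex.mul_re, Complex.conj_re, Complex.conj_im]
        ring
      have hR2' : ∀ p q, P p → P q → (z p * z q).im = (w' p * w' q).im := by
        intro p q hp hq
        have e : w' p * w' q = -((starRingEnd ℂ) (w p * w q)) := by
          simp only [hw', map_mul]
          linear_combination ((starRingEnd ℂ) (w p) * (starRingEnd ℂ) (w q)) * Complex.I_sq
        rw [e, hR2 p q hp hq]
        simp only [Complex.neg_im, Complex.conj_im, neg_neg]
      have hW' : (starRingEnd ℂ) (w' p₁) * w' p₂ = (starRingEnd ℂ) (z p₁) * z p₂ := by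
        have e : (starRingEnd ℂ) (w' p₁) * w' p₂
            = (starRingEnd ℂ) ((starRingEnd ℂ) (w p₁) * w p₂) := by
          simp only [hw', map_mul, Complex.conj_conj, Complex.conj_I]
          linear_combination (-((w p₁) * (starRingEnd ℂ) (w p₂))) * Complex.I_sq
        rw [e]
        apply Complex.ext
        · rw [Complex.conj_re]; exact (hR1 p₁ p₂ h₁ h₂).symm
        · rw [Complex.conj_im, hc, neg_neg]
      rcases quad_half P z w' p₁ p₂ h₁ h₂ hR1' hR2' hD hW' with h | h
      · right; right; left
        intro p hp
        have hc2 := congrArg (starRingEnd ℂ) (h p hp)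
        simp only [hw', map_mul, Complex.conj_conj, Complex.conj_I] at hc2
        rw [← hc2]
        linear_combination (w p) * Complex.I_sq
      · right; right; right
        intro p hp
        have e0 := congrArg (starRingEnd ℂ) (h p hp)
        rw [map_mul, Complex.conj_I, Complex.conj_conj, map_neg] at e0
        linear_combination Complex.I * e0 + (w p) * Complex.I_sq
  · push_neg at hdeg
    by_cases hz : ∀ p, P p → z p = 0
    · left
      intro p hp
      have h0 := (hR1 p p hp hp).symm
      rw [hz p hp, mul_zero, Complex.zero_re] at h0
      rw [← Complex.normSq_eq_conj_mul_self, Complex.ofReal_re] at h0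
      rw [hz p hp]
      exact Complex.normSq_eq_zero.mp h0
    · push_neg at hz
      obtain ⟨p₀, hp₀, hA⟩ := hz
      set A := z p₀ with hAdef
      set B := w p₀ with hBdef
      have hnA : Complex.normSq A ≠ 0 := fun h => hA (Complex.normSq_eq_zero.mp h)
      have hnB : Complex.normSq B = Complex.normSq A := hnsq p₀ hp₀
      have hB0 : B ≠ 0 := fun h => hA (Complex.normSq_eq_zero.mp (by rw [← hnB, h, Complex.normSq_zero]))
      have hBc : (starRingEnd ℂ) B ≠ 0 := fun h => hB0 (by simpa using congrArg (starRingEnd ℂ) h)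
      have hAc : (starRingEnd ℂ) A ≠ 0 := fun h => hA (by simpa using congrArg (starRingEnd ℂ) h)
      obtain ⟨t, ht⟩ : ∃ t : ℤ → ℝ, ∀ p, ((starRingEnd ℂ) A * z p).re = t p * Complex.normSq A :=
        ⟨fun p => ((starRingEnd ℂ) A * z p).re / Complex.normSq A,
          fun p => (div_mul_cancel₀ _ hnA).symm⟩
      have zt : ∀ p, P p → z p = ((t p : ℝ) : ℂ) * A := by
        intro p hp
        have him := hdeg p₀ p hp₀ hp
        have e : (starRingEnd ℂ) A * z p = ((((starRingEnd ℂ) A * z p).re : ℝ) : ℂ) := by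
          apply Complex.ext
          · rw [Complex.ofReal_re]
          · rw [Complex.ofReal_im]; exact him
        rw [ht p, Complex.ofReal_mul, Complex.normSq_eq_conj_mul_self] at e
        have e3 : (starRingEnd ℂ) A * z p = (starRingEnd ℂ) A * (((t p : ℝ) : ℂ) * A) := by
          rw [e]; ring
        exact mul_left_cancel₀ hAc e3
      have wt : ∀ p, P p → w p = ((t p : ℝ) : ℂ) * B := by
        intro p hp
        have hre : ((starRingEnd ℂ) B * w p).re = t p * Complex.normSq A := by
          rw [← hR1 p₀ p hp₀ hp]
          exact ht p
        have hsq : Complex.normSq (w p) = t p ^ 2 * Complex.normSq A := by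
          rw [hnsq p hp, zt p hp, Complex.normSq_mul, Complex.normSq_ofReal]
          ring
        have e : (starRingEnd ℂ) B * w p = ((t p * Complex.normSq A : ℝ) : ℂ) := by
          apply Complex.ext
          · rw [hre, Complex.ofReal_re]
          · rw [Complex.ofReal_im]
            have h2 : Complex.normSq ((starRingEnd ℂ) B * w p) = (t p * Complex.normSq A) ^ 2 := by
              rw [Complex.normSq_mul, Complex.normSq_conj, hnB, hsq]
              ring
            have h3 := Complex.normSq_apply ((starRingEnd ℂ) B * w p)
            have h4 : ((starRingEnd ℂ) B * w p).im * ((starRingEnd ℂ) B * w p).im = 0 := by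
              linear_combination h2 - h3 - (((starRingEnd ℂ) B * w p).re + t p * Complex.normSq A) * hre
            exact mul_self_eq_zero.mp h4
        have e4 : (starRingEnd ℂ) B * (w p - ((t p : ℝ) : ℂ) * B) = 0 := by
          have eB : (starRingEnd ℂ) B * B = ((Complex.normSq A : ℝ) : ℂ) := by
            rw [← hnB, ← Complex.normSq_eq_conj_mul_self]
          rw [mul_sub, e]
          rw [Complex.ofReal_mul]
          linear_combination (-((t p : ℝ) : ℂ)) * eB
        exact sub_eq_zero.mp ((mul_eq_zero.1 e4).resolve_left hBc)
      have hr2 := hR2 p₀ p₀ hp₀ hp₀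
      have hnsq2 : Complex.normSq (B * B) = Complex.normSq (A * A) := by
        rw [Complex.normSq_mul, Complex.normSq_mul, hnB]
      have hresq : (B * B).re * (B * B).re = (A * A).re * (A * A).re := by
        have h3 := Complex.normSq_apply (B * B)
        have h4 := Complex.normSq_apply (A * A)
        linear_combination hnsq2 - h3 + h4 + ((A * A).im + (B * B).im) * hr2
      rcases mul_self_eq_mul_self_iff.1 hresq with hc | hc
      · have eBB : B * B = A * A := Complex.ext hc hr2.symm
        rcases mul_eq_zero.1 (show (B - A) * (B + A) = 0 by linear_combination eBB) with h' | h'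
        · left
          intro p hp
          rw [wt p hp, sub_eq_zero.mp h', ← zt p hp]
        · right; left
          intro p hp
          rw [wt p hp, show B = -A from eq_neg_of_add_eq_zero_left h', zt p hp]
          ring
      · have eBB : B * B = (Complex.I * (starRingEnd ℂ) A) * (Complex.I * (starRingEnd ℂ) A) := by
          have eR : (Complex.I * (starRingEnd ℂ) A) * (Complex.I * (starRingEnd ℂ) A)
              = -((starRingEnd ℂ) (A * A)) := by
            rw [map_mul]
            linear_combination ((starRingEnd ℂ) A * (starRingEnd ℂ) A) * Complex.I_sq
          rw [eR]
          apply Complex.ext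
          · rw [Complex.neg_re, Complex.conj_re, hc]
          · rw [Complex.neg_im, Complex.conj_im, neg_neg]
            exact hr2.symm
        rcases mul_eq_zero.1 (show (B - Complex.I * (starRingEnd ℂ) A) * (B + Complex.I * (starRingEnd ℂ) A) = 0 by
            linear_combination eBB) with h' | h'
        · right; right; left
          intro p hp
          rw [wt p hp, sub_eq_zero.mp h', zt p hp, map_mul, Complex.conj_ofReal]
          ring
        · right; right; right
          intro p hp
          rw [wt p hp, show B = -(Complex.I * (starRingEnd ℂ) A) from eq_neg_of_add_eq_zero_left h',
            zt p hp, map_mul, Complex.conj_ofReal]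
          ring

open Matrix

theorem real_normal_toeplitz_four_types (N : ℕ) (hN : 1 ≤ N) (a : ℤ → ℝ)
    (T : Matrix (Fin (N + 1)) (Fin (N + 1)) ℝ)
    (hT : ∀ j k : Fin (N + 1), T j k = a ((j : ℤ) - (k : ℤ)))
    (hnormal : T * Tᵀ = Tᵀ * T) :
    (∀ k : ℤ, 1 ≤ k → k ≤ N → a (-k) = a k) ∨
    (∀ k : ℤ, 1 ≤ k → k ≤ N → a (-k) = -a k) ∨
    (∀ k : ℤ, 1 ≤ k → k ≤ N → a (-k) = a ((N : ℤ) + 1 - k)) ∨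
    (∀ k : ℤ, 1 ≤ k → k ≤ N → a (-k) = -a ((N : ℤ) + 1 - k)) := by
  have hFG : ∀ p q : ℕ, p ≤ N → q ≤ N →
      (∑ m ∈ Finset.range (N+1), a ((p:ℤ) - (m:ℤ)) * a ((q:ℤ) - (m:ℤ)))
      = ∑ m ∈ Finset.range (N+1), a ((m:ℤ) - (p:ℤ)) * a ((m:ℤ) - (q:ℤ)) := by
    intro p q hp hq
    have hp' : p < N + 1 := Nat.lt_succ_of_le hp
    have hq' : q < N + 1 := Nat.lt_succ_of_le hq
    have h := congrFun (congrFun hnormal ⟨p, hp'⟩) ⟨q, hq'⟩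
    rw [Matrix.mul_apply, Matrix.mul_apply] at h
    simp only [Matrix.transpose_apply] at h
    have key1 : ∑ j : Fin (N+1), T ⟨p, hp'⟩ j * T ⟨q, hq'⟩ j
        = ∑ m ∈ Finset.range (N+1), a ((p:ℤ) - (m:ℤ)) * a ((q:ℤ) - (m:ℤ)) := by
      rw [← Fin.sum_univ_eq_sum_range (fun m : ℕ => a ((p:ℤ) - (m:ℤ)) * a ((q:ℤ) - (m:ℤ))) (N+1)]
      exact Finset.sum_congr rfl fun j _ => by rw [hT ⟨p,hp'⟩ j, hT ⟨q,hq'⟩ j]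
    have key2 : ∑ j : Fin (N+1), T j ⟨p, hp'⟩ * T j ⟨q, hq'⟩
        = ∑ m ∈ Finset.range (N+1), a ((m:ℤ) - (p:ℤ)) * a ((m:ℤ) - (q:ℤ)) := by
      rw [← Fin.sum_univ_eq_sum_range (fun m : ℕ => a ((m:ℤ) - (p:ℤ)) * a ((m:ℤ) - (q:ℤ))) (N+1)]
      exact Finset.sum_congr rfl fun j _ => by rw [hT j ⟨p,hp'⟩, hT j ⟨q,hq'⟩]
    rw [← key1, ← key2]
    exact h
  have hstep1 : ∀ x y : ℕ,
      (∑ m ∈ Finset.range (N+1), a (((x:ℤ)+1) - (m:ℤ)) * a (((y:ℤ)+1) - (m:ℤ)))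
      = (∑ m ∈ Finset.range (N+1), a ((x:ℤ) - (m:ℤ)) * a ((y:ℤ) - (m:ℤ)))
        + a ((x:ℤ)+1) * a ((y:ℤ)+1) - a ((x:ℤ) - (N:ℤ)) * a ((y:ℤ) - (N:ℤ)) := by
    intro x y
    rw [Finset.sum_range_succ' (fun m : ℕ => a (((x:ℤ)+1) - (m:ℤ)) * a (((y:ℤ)+1) - (m:ℤ))) N,
      Finset.sum_range_succ (fun m : ℕ => a ((x:ℤ) - (m:ℤ)) * a ((y:ℤ) - (m:ℤ))) N]
    have hs : ∑ i ∈ Finset.range N, a (((x:ℤ)+1) - ((i+1 : ℕ):ℤ)) * a (((y:ℤ)+1) - ((i+1 : ℕ):ℤ))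
        = ∑ i ∈ Finset.range N, a ((x:ℤ) - (i:ℤ)) * a ((y:ℤ) - (i:ℤ)) := by
      refine Finset.sum_congr rfl fun i _ => ?_
      rw [show ((x:ℤ)+1) - ((i+1 : ℕ):ℤ) = (x:ℤ) - (i:ℤ) by push_cast; ring,
        show ((y:ℤ)+1) - ((i+1 : ℕ):ℤ) = (y:ℤ) - (i:ℤ) by push_cast; ring]
    rw [hs]
    simp only [Nat.cast_zero, sub_zero]
    ring
  have hstep2 : ∀ x y : ℕ,
      (∑ m ∈ Finset.range (N+1), a ((m:ℤ) - ((x:ℤ)+1)) * a ((m:ℤ) - ((y:ℤ)+1)))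
      = (∑ m ∈ Finset.range (N+1), a ((m:ℤ) - (x:ℤ)) * a ((m:ℤ) - (y:ℤ)))
        + a (-1-(x:ℤ)) * a (-1-(y:ℤ)) - a ((N:ℤ)-(x:ℤ)) * a ((N:ℤ)-(y:ℤ)) := by
    intro x y
    rw [Finset.sum_range_succ' (fun m : ℕ => a ((m:ℤ) - ((x:ℤ)+1)) * a ((m:ℤ) - ((y:ℤ)+1))) N,
      Finset.sum_range_succ (fun m : ℕ => a ((m:ℤ) - (x:ℤ)) * a ((m:ℤ) - (y:ℤ))) N]
    have hs : ∑ i ∈ Finset.range N, a (((i+1 : ℕ):ℤ) - ((x:ℤ)+1)) * a (((i+1 : ℕ):ℤ) - ((y:ℤ)+1))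
        = ∑ i ∈ Finset.range N, a ((i:ℤ) - (x:ℤ)) * a ((i:ℤ) - (y:ℤ)) := by
      refine Finset.sum_congr rfl fun i _ => ?_
      rw [show ((i+1 : ℕ):ℤ) - ((x:ℤ)+1) = (i:ℤ) - (x:ℤ) by push_cast; ring,
        show ((i+1 : ℕ):ℤ) - ((y:ℤ)+1) = (i:ℤ) - (y:ℤ) by push_cast; ring]
    rw [hs]
    simp only [Nat.cast_zero, zero_sub]
    rw [show -((x:ℤ)+1) = -1-(x:ℤ) from by ring, show -((y:ℤ)+1) = -1-(y:ℤ) from by ring]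
    ring
  have hE : ∀ p q : ℤ, 1 ≤ p → p ≤ (N:ℤ) → 1 ≤ q → q ≤ (N:ℤ) →
      a p * a q + a ((N:ℤ)+1-p) * a ((N:ℤ)+1-q)
      = a (-p) * a (-q) + a (p-(N:ℤ)-1) * a (q-(N:ℤ)-1) := by
    intro p q hp1 hpN hq1 hqN
    obtain ⟨x, rfl⟩ : ∃ x : ℕ, p = (x:ℤ)+1 := ⟨(p-1).toNat, by omega⟩
    obtain ⟨y, rfl⟩ : ∃ y : ℕ, q = (y:ℤ)+1 := ⟨(q-1).toNat, by omega⟩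
    have h1 := hFG (x+1) (y+1) (by omega) (by omega)
    have h0 := hFG x y (by omega) (by omega)
    have hs1 := hstep1 x y
    have hs2 := hstep2 x y
    push_cast at h1 h0
    rw [show (N:ℤ)+1-((x:ℤ)+1) = (N:ℤ)-(x:ℤ) from by ring,
      show (N:ℤ)+1-((y:ℤ)+1) = (N:ℤ)-(y:ℤ) from by ring,
      show -((x:ℤ)+1) = -1-(x:ℤ) from by ring,
      show -((y:ℤ)+1) = -1-(y:ℤ) from by ring,
      show (x:ℤ)+1-(N:ℤ)-1 = (x:ℤ)-(N:ℤ) from by ring,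
      show (y:ℤ)+1-(N:ℤ)-1 = (y:ℤ)-(N:ℤ) from by ring]
    linarith [h1, h0, hs1, hs2]
  set P : ℤ → Prop := fun p => 1 ≤ p ∧ p ≤ (N:ℤ) with hP
  set z : ℤ → ℂ := fun p => ⟨a p, a ((N:ℤ)+1-p)⟩ with hz
  set w : ℤ → ℂ := fun p => ⟨a (-p), a (p-(N:ℤ)-1)⟩ with hw
  have hR1 : ∀ p q, P p → P q →
      ((starRingEnd ℂ) (z p) * z q).re = ((starRingEnd ℂ) (w p) * w q).re := by
    intro p q hp hq
    have h := hE p q hp.1 hp.2 hq.1 hq.2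
    simp only [hz, hw, Complex.mul_re, Complex.conj_re, Complex.conj_im]
    linear_combination h
  have hR2 : ∀ p q, P p → P q → (z p * z q).im = (w p * w q).im := by
    intro p q hp hq
    have h := hE p ((N:ℤ)+1-q) hp.1 hp.2 (by omega) (by omega)
    rw [show (N:ℤ)+1-((N:ℤ)+1-q) = q by ring, show -((N:ℤ)+1-q) = q-(N:ℤ)-1 by ring,
      show ((N:ℤ)+1-q)-(N:ℤ)-1 = -q by ring] at h
    simp only [hz, hw, Complex.mul_im]
    linear_combination h
  rcases quad_main P z w hR1 hR2 with h | h | h | h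
  · left
    intro k hk1 hkN
    have hk := congrArg Complex.re (h k ⟨hk1, hkN⟩)
    simpa [hz, hw] using hk
  · right; left
    intro k hk1 hkN
    have hk := congrArg Complex.re (h k ⟨hk1, hkN⟩)
    simpa [hz, hw, Complex.neg_re] using hk
  · right; right; left
    intro k hk1 hkN
    have hk := congrArg Complex.re (h k ⟨hk1, hkN⟩)
    simpa [hz, hw, Complex.mul_re, Complex.I_re, Complex.I_im,
      Complex.conj_re, Complex.conj_im] using hk
  · right; right; right
    intro k hk1 hkN
    have hk := congrArg Complex.re (h k ⟨hk1, hkN⟩)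
    simpa [hz, hw, Complex.neg_re, Complex.mul_re, Complex.I_re, Complex.I_im,
      Complex.conj_re, Complex.conj_im] using hk
end

section
/- Let N ≥ 1 and let a : ℤ → ℂ. Suppose there exists α₀ ∈ ℂ with |α₀| = 1 such that a(-k) = α₀ * conj(a k) for all 1 ≤ k ≤ N (type I). Then the (N+1)×(N+1) Toeplitz matrix T with entries T j k = a (j - k) is normal: T * Tᴴ = Tᴴ * T. -/
open Matrix

theorem typeI_toeplitz_is_normal (N : ℕ) (hN : 1 ≤ N) (a : ℤ → ℂ)
    (T : Matrix (Fin (N + 1)) (Fin (N + 1)) ℂ)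
    (hT : ∀ j k : Fin (N + 1), T j k = a ((j : ℤ) - (k : ℤ)))
    (h : ∃ α₀ : ℂ, ‖α₀‖ = 1 ∧
      ∀ k : ℤ, 1 ≤ k → k ≤ N → a (-k) = α₀ * (starRingEnd ℂ) (a k)) :
    T * Tᴴ = Tᴴ * T := by
  obtain ⟨α₀, hα, hrel⟩ := h
  have hαc : α₀ * (starRingEnd ℂ) α₀ = 1 := by
    rw [Complex.mul_conj, ← Complex.sq_norm, hα]
    norm_num
  have key : ∀ m : ℤ, m ≠ 0 → m.natAbs ≤ N →
      a (-m) = α₀ * (starRingEnd ℂ) (a m) := by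
    intro m hm hmN
    rcases lt_or_gt_of_ne hm with hneg | hpos
    · have h1 : 1 ≤ -m := by omega
      have h2 : -m ≤ (N : ℤ) := by omega
      have := hrel (-m) h1 h2
      rw [neg_neg] at this
      rw [this, _root_.map_mul, Complex.conj_conj, ← mul_assoc, hαc, one_mul]
    · exact hrel m (by omega) (by omega)
  ext j k
  rw [mul_apply, mul_apply]
  apply Fintype.sum_equiv (Equiv.swap j k)
  intro x
  have hjN : (j : ℕ) ≤ N := by omega
  have hkN : (k : ℕ) ≤ N := by omega
  have hxN : (x : ℕ) ≤ N := by omega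
  by_cases hxj : x = j
  · subst hxj
    rw [Equiv.swap_apply_left]
    simp only [conjTranspose_apply, hT]
    rw [RCLike.star_def]
    ring
  · by_cases hxk : x = k
    · subst hxk
      rw [Equiv.swap_apply_right]
      simp only [conjTranspose_apply, hT]
      rw [RCLike.star_def]
      ring
    · rw [Equiv.swap_apply_of_ne_of_ne hxj hxk]
      simp only [conjTranspose_apply, hT, RCLike.star_def]
      have hvj : (x : ℕ) ≠ (j : ℕ) := fun hh => hxj (Fin.ext hh)
      have hvk : (x : ℕ) ≠ (k : ℕ) := fun hh => hxk (Fin.ext hh)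
      have e1 : a ((j : ℤ) - (x : ℤ)) = α₀ * (starRingEnd ℂ) (a ((x : ℤ) - (j : ℤ))) := by
        have := key ((x : ℤ) - (j : ℤ)) (by omega) (by omega)
        rw [show -((x : ℤ) - (j : ℤ)) = (j : ℤ) - (x : ℤ) by ring] at this
        exact this
      have e2 : a ((x : ℤ) - (k : ℤ)) = α₀ * (starRingEnd ℂ) (a ((k : ℤ) - (x : ℤ))) := by
        have := key ((k : ℤ) - (x : ℤ)) (by omega) (by omega)
        rw [show -((k : ℤ) - (x : ℤ)) = (x : ℤ) - (k : ℤ) by ring] at this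
        exact this
      rw [e1, e2]
      ring
end

section
/- Let N ≥ 1 and let a : ℤ → ℂ. Suppose there exists β₀ ∈ ℂ with |β₀| = 1 such that a(-k) = β₀ * a(N + 1 - k) for all 1 ≤ k ≤ N (type II). Then the (N+1)×(N+1) Toeplitz matrix T with entries T j k = a (j - k) is normal: T * Tᴴ = Tᴴ * T. -/
open Matrix

theorem typeII_toeplitz_is_normal (N : ℕ) (hN : 1 ≤ N) (a : ℤ → ℂ)
    (T : Matrix (Fin (N + 1)) (Fin (N + 1)) ℂ)
    (hT : ∀ j k : Fin (N + 1), T j k = a ((j : ℤ) - (k : ℤ)))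
    (h : ∃ β₀ : ℂ, ‖β₀‖ = 1 ∧
      ∀ k : ℤ, 1 ≤ k → k ≤ N → a (-k) = β₀ * a ((N : ℤ) + 1 - k)) :
    T * Tᴴ = Tᴴ * T := by
  obtain ⟨β, hβabs, hβ⟩ := h
  have hββ : β * star β = 1 := by
    rw [Complex.star_def, Complex.mul_conj, ← Complex.sq_norm, hβabs]; norm_num
  have key : ∀ m : ℤ, -(N:ℤ) ≤ m → m ≤ -1 → a m = β * a (m + ((N:ℤ)+1)) := by
    intro m h1 h2
    have h3 := hβ (-m) (by omega) (by omega)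
    rw [neg_neg] at h3
    have h4 : (N:ℤ) + 1 - (-m) = m + ((N:ℤ)+1) := by ring
    rw [h4] at h3
    exact h3
  ext j k
  rw [mul_apply, mul_apply]
  apply Fintype.sum_equiv (Equiv.subLeft (j + k))
  intro l
  simp only [Equiv.subLeft_apply]
  set l' : Fin (N+1) := j + k - l with hl'
  have hadd : l' + l = j + k := by rw [hl']; abel
  have hval : (l'.val + l.val) % (N+1) = (j.val + k.val) % (N+1) := by
    have h5 := congrArg Fin.val hadd
    simpa [Fin.val_add] using h5
  have hdvd : ((N:ℤ)+1) ∣ ((j.val:ℤ) + (k.val:ℤ) - ((l'.val:ℤ) + (l.val:ℤ))) := by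
    have h6 := Nat.ModEq.dvd (hval : (l'.val + l.val) ≡ (j.val + k.val) [MOD N+1])
    push_cast at h6 ⊢
    convert h6 using 1 <;> push_cast <;> ring
  obtain ⟨c, hc⟩ := hdvd
  have hjN : (j.val:ℤ) ≤ N := by have := j.isLt; omega
  have hkN : (k.val:ℤ) ≤ N := by have := k.isLt; omega
  have hlN : (l.val:ℤ) ≤ N := by have := l.isLt; omega
  have hl'N : (l'.val:ℤ) ≤ N := by have := l'.isLt; omega
  have hj0 : (0:ℤ) ≤ (j.val:ℤ) := by positivity
  have hk0 : (0:ℤ) ≤ (k.val:ℤ) := by positivity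
  have hl0 : (0:ℤ) ≤ (l.val:ℤ) := by positivity
  have hl'0 : (0:ℤ) ≤ (l'.val:ℤ) := by positivity
  have hN1 : (1:ℤ) ≤ (N:ℤ) := by exact_mod_cast hN
  have hc1 : c ≤ 1 := by nlinarith
  have hc2 : -1 ≤ c := by nlinarith
  rw [conjTranspose_apply, conjTranspose_apply, hT, hT, hT, hT]
  interval_cases c
  · -- c = -1 : l' = j + k - l + (N+1)
    have e1 : a ((j.val:ℤ) - (l.val:ℤ)) = β * a ((l'.val:ℤ) - (k.val:ℤ)) := by
      have h7 := key ((j.val:ℤ) - (l.val:ℤ)) (by omega) (by omega)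
      rw [h7]
      congr 2
      omega
    have e2 : a ((k.val:ℤ) - (l.val:ℤ)) = β * a ((l'.val:ℤ) - (j.val:ℤ)) := by
      have h7 := key ((k.val:ℤ) - (l.val:ℤ)) (by omega) (by omega)
      rw [h7]
      congr 2
      omega
    rw [e1, e2, star_mul']
    linear_combination (star (a ((l'.val:ℤ) - (j.val:ℤ))) * a ((l'.val:ℤ) - (k.val:ℤ))) * hββ
  · -- c = 0
    have e1 : (l'.val:ℤ) - (j.val:ℤ) = (k.val:ℤ) - (l.val:ℤ) := by omega
    have e2 : (l'.val:ℤ) - (k.val:ℤ) = (j.val:ℤ) - (l.val:ℤ) := by omega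
    rw [e1, e2]
    ring
  · -- c = 1 : l' = j + k - l - (N+1)
    have e1 : a ((l'.val:ℤ) - (j.val:ℤ)) = β * a ((k.val:ℤ) - (l.val:ℤ)) := by
      have h7 := key ((l'.val:ℤ) - (j.val:ℤ)) (by omega) (by omega)
      rw [h7]
      congr 2
      omega
    have e2 : a ((l'.val:ℤ) - (k.val:ℤ)) = β * a ((j.val:ℤ) - (l.val:ℤ)) := by
      have h7 := key ((l'.val:ℤ) - (k.val:ℤ)) (by omega) (by omega)
      rw [h7]
      congr 2
      omega
    rw [e1, e2, star_mul']
    linear_combination (-(star (a ((k.val:ℤ) - (l.val:ℤ))) * a ((j.val:ℤ) - (l.val:ℤ)))) * hββ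
end

section
/- Let N ≥ 1 and let a : ℤ → ℂ. Define trigonometric polynomials s(x) = ∑_{k=1}^{N} a k * exp(i k x) and t(x) = ∑_{k=1}^{N} a (-k) * exp(-i k x) for x ∈ ℝ. Then the following are equivalent: (i) for all m, n with 1 ≤ m, n ≤ N, a m * conj(a n) - conj(a (-m)) * a (-n) + conj(a (N+1-m)) * a (N+1-n) - a (-(N+1-m)) * conj(a (-(N+1-n))) = 0; (ii) for all real x and y, s(x) * conj(s(y)) - conj(t(x)) * t(y) + conj(s(x)) * s(y) * exp(i (N+1) (x - y)) - t(x) * conj(t(y)) * exp(i (N+1) (x - y)) = 0. -/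
open Finset Complex

lemma exp_neg_inj' : Set.InjOn (fun y : ℝ => Complex.exp (-(Complex.I * y))) (Set.Ioo 0 1) := by
  intro y1 h1 y2 h2 h
  rw [Complex.exp_eq_exp_iff_exists_int] at h
  obtain ⟨n, hn⟩ := h
  have : (y2 : ℂ) - y1 = n * (2 * Real.pi) := by
    have hI : Complex.I ≠ 0 := Complex.I_ne_zero
    have h2 : Complex.I * ((y2:ℂ) - y1) = Complex.I * (n * (2*Real.pi)) := by
      linear_combination hn
    exact mul_left_cancel₀ hI h2
  have hre : (y2 : ℝ) - y1 = n * (2 * Real.pi) := by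
    exact_mod_cast congrArg Complex.re this
  have hpi := Real.pi_gt_three
  have hn0 : n = 0 := by
    by_contra hne
    have h1' : (1:ℝ) ≤ |(n:ℝ)| := by
      exact_mod_cast Int.one_le_abs (by exact_mod_cast hne)
    have : |(y2:ℝ) - y1| < 1 := by
      obtain ⟨a1, b1⟩ := h1; obtain ⟨a2, b2⟩ := h2
      rw [abs_sub_lt_iff]; constructor <;> linarith
    rw [hre, abs_mul] at this
    have : (1:ℝ) * 1 ≤ |(n:ℝ)| * |2*Real.pi| := by
      apply mul_le_mul h1' _ (by norm_num) (abs_nonneg _)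
      rw [abs_of_pos (by positivity)]; linarith
    linarith
  rw [hn0] at hre; simp at hre; linarith [hre]

lemma coeff_zero_of_sum_exp (N : ℕ) (b : ℕ → ℂ)
    (h : ∀ y : ℝ, ∑ k ∈ Finset.Icc 1 N, b k * Complex.exp (-(Complex.I * (k:ℂ) * (y:ℂ))) = 0) :
    ∀ k ∈ Finset.Icc 1 N, b k = 0 := by
  set p : Polynomial ℂ := ∑ k ∈ Finset.Icc 1 N, Polynomial.C (b k) * Polynomial.X ^ k with hp
  have hroot : ∀ y : ℝ, p.IsRoot (Complex.exp (-(Complex.I * y))) := by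
    intro y
    have := h y
    simp only [Polynomial.IsRoot, hp, Polynomial.eval_finset_sum, Polynomial.eval_mul,
      Polynomial.eval_C, Polynomial.eval_pow, Polynomial.eval_X]
    rw [← this]
    apply Finset.sum_congr rfl
    intro k _
    congr 1
    rw [← Complex.exp_nat_mul]
    ring_nf
  have hpz : p = 0 := by
    apply Polynomial.eq_zero_of_infinite_isRoot
    apply Set.Infinite.mono (s := (fun y : ℝ => Complex.exp (-(Complex.I * y))) '' (Set.Ioo 0 1))
    · rintro z ⟨y, _, rfl⟩; exact hroot y
    · exact Set.Infinite.image (exp_neg_inj') (Set.Ioo_infinite (by norm_num))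
  intro k hk
  have : p.coeff k = b k := by
    rw [hp, Polynomial.finset_sum_coeff]
    rw [Finset.sum_eq_single k]
    · simp
    · intro j _ hj
      simp [Polynomial.coeff_X_pow, hj, Ne.symm hj]
    · intro hk'; exact absurd hk hk'
  rw [hpz] at this
  simpa using this.symm

lemma refl_sum (N : ℕ) (f : ℕ → ℂ) :
    ∑ k ∈ Finset.Icc 1 N, f k = ∑ k ∈ Finset.Icc 1 N, f (N+1-k) := by
  refine Finset.sum_nbij' (fun k => N+1-k) (fun k => N+1-k) ?_ ?_ ?_ ?_ ?_ <;>
    (intro k hk; simp only [Finset.mem_Icc] at *) <;> first | omega | (congr 1; omega)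

theorem condition_iff_trig_identity (N : ℕ) (hN : 1 ≤ N) (a : ℤ → ℂ)
    (s t : ℝ → ℂ)
    (hs : ∀ x : ℝ, s x = ∑ k ∈ Finset.Icc 1 N, a (k : ℤ) * Complex.exp (Complex.I * (k : ℂ) * (x : ℂ)))
    (ht : ∀ x : ℝ, t x = ∑ k ∈ Finset.Icc 1 N, a (-(k : ℤ)) * Complex.exp (-(Complex.I * (k : ℂ) * (x : ℂ)))) :
    (∀ m n : ℤ, 1 ≤ m → m ≤ N → 1 ≤ n → n ≤ N →
        a m * (starRingEnd ℂ) (a n) - (starRingEnd ℂ) (a (-m)) * a (-n)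
          + (starRingEnd ℂ) (a ((N : ℤ) + 1 - m)) * a ((N : ℤ) + 1 - n)
          - a (-((N : ℤ) + 1 - m)) * (starRingEnd ℂ) (a (-((N : ℤ) + 1 - n))) = 0) ↔
    (∀ x y : ℝ,
        s x * (starRingEnd ℂ) (s y) - (starRingEnd ℂ) (t x) * t y
          + (starRingEnd ℂ) (s x) * s y * Complex.exp (Complex.I * ((N : ℂ) + 1) * ((x : ℂ) - (y : ℂ)))
          - t x * (starRingEnd ℂ) (t y) * Complex.exp (Complex.I * ((N : ℂ) + 1) * ((x : ℂ) - (y : ℂ))) = 0) := by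
  set c : ℕ → ℕ → ℂ := fun m n =>
    a (m:ℤ) * (starRingEnd ℂ) (a (n:ℤ)) - (starRingEnd ℂ) (a (-(m:ℤ))) * a (-(n:ℤ))
      + (starRingEnd ℂ) (a ((N:ℤ) + 1 - m)) * a ((N:ℤ) + 1 - n)
      - a (-((N:ℤ) + 1 - m)) * (starRingEnd ℂ) (a (-((N:ℤ) + 1 - n))) with hc
  have hconj1 : ∀ (k : ℕ) (u : ℝ),
      (starRingEnd ℂ) (Complex.exp (Complex.I * (k:ℂ) * (u:ℂ))) =
        Complex.exp (-(Complex.I * (k:ℂ) * (u:ℂ))) := by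
    intro k u
    rw [← Complex.exp_conj]
    congr 1
    simp [map_mul, Complex.conj_I, Complex.conj_ofReal]
  have hconj2 : ∀ (k : ℕ) (u : ℝ),
      (starRingEnd ℂ) (Complex.exp (-(Complex.I * (k:ℂ) * (u:ℂ)))) =
        Complex.exp (Complex.I * (k:ℂ) * (u:ℂ)) := by
    intro k u
    rw [← Complex.exp_conj]
    congr 1
    simp [map_mul, Complex.conj_I, Complex.conj_ofReal]
  have key : ∀ x y : ℝ,
      s x * (starRingEnd ℂ) (s y) - (starRingEnd ℂ) (t x) * t y
          + (starRingEnd ℂ) (s x) * s y * Complex.exp (Complex.I * ((N : ℂ) + 1) * ((x : ℂ) - (y : ℂ)))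
          - t x * (starRingEnd ℂ) (t y) * Complex.exp (Complex.I * ((N : ℂ) + 1) * ((x : ℂ) - (y : ℂ)))
        = ∑ m ∈ Finset.Icc 1 N, ∑ n ∈ Finset.Icc 1 N,
            c m n * (Complex.exp (Complex.I * (m:ℂ) * (x:ℂ)) * Complex.exp (-(Complex.I * (n:ℂ) * (y:ℂ)))) := by
    intro x y
    have e1 : ∀ m n : ℕ, m ≤ N → n ≤ N →
        Complex.exp (-(Complex.I * (m:ℂ) * (x:ℂ))) * Complex.exp (Complex.I * (n:ℂ) * (y:ℂ))
          * Complex.exp (Complex.I * ((N:ℂ)+1) * ((x:ℂ) - (y:ℂ)))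
        = Complex.exp (Complex.I * ((N+1-m : ℕ):ℂ) * (x:ℂ)) * Complex.exp (-(Complex.I * ((N+1-n : ℕ):ℂ) * (y:ℂ))) := by
      intro m n hm hn
      rw [← Complex.exp_add, ← Complex.exp_add, ← Complex.exp_add]
      congr 1
      have hm' : ((N+1-m : ℕ):ℂ) = (N:ℂ) + 1 - m := by
        push_cast [Nat.cast_sub (by omega : m ≤ N+1)]; ring
      have hn' : ((N+1-n : ℕ):ℂ) = (N:ℂ) + 1 - n := by
        push_cast [Nat.cast_sub (by omega : n ≤ N+1)]; ring
      rw [hm', hn']; ring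
    have T1 : s x * (starRingEnd ℂ) (s y)
        = ∑ m ∈ Finset.Icc 1 N, ∑ n ∈ Finset.Icc 1 N,
            (a (m:ℤ) * (starRingEnd ℂ) (a (n:ℤ))) *
              (Complex.exp (Complex.I * (m:ℂ) * (x:ℂ)) * Complex.exp (-(Complex.I * (n:ℂ) * (y:ℂ)))) := by
      rw [hs x, hs y, map_sum, Finset.sum_mul_sum]
      refine Finset.sum_congr rfl fun m _ => Finset.sum_congr rfl fun n _ => ?_
      rw [map_mul, hconj1]; ring
    have T2 : (starRingEnd ℂ) (t x) * t y
        = ∑ m ∈ Finset.Icc 1 N, ∑ n ∈ Finset.Icc 1 N,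
            ((starRingEnd ℂ) (a (-(m:ℤ))) * a (-(n:ℤ))) *
              (Complex.exp (Complex.I * (m:ℂ) * (x:ℂ)) * Complex.exp (-(Complex.I * (n:ℂ) * (y:ℂ)))) := by
      rw [ht x, ht y, map_sum, Finset.sum_mul_sum]
      refine Finset.sum_congr rfl fun m _ => Finset.sum_congr rfl fun n _ => ?_
      rw [map_mul, hconj2]; ring
    have T3 : (starRingEnd ℂ) (s x) * s y * Complex.exp (Complex.I * ((N : ℂ) + 1) * ((x : ℂ) - (y : ℂ)))
        = ∑ m ∈ Finset.Icc 1 N, ∑ n ∈ Finset.Icc 1 N,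
            ((starRingEnd ℂ) (a ((N:ℤ) + 1 - m)) * a ((N:ℤ) + 1 - n)) *
              (Complex.exp (Complex.I * (m:ℂ) * (x:ℂ)) * Complex.exp (-(Complex.I * (n:ℂ) * (y:ℂ)))) := by
      rw [hs x, hs y, map_sum, Finset.sum_mul_sum]
      rw [Finset.sum_mul]
      conv_rhs => rw [refl_sum]
      refine Finset.sum_congr rfl fun m hm => ?_
      rw [Finset.sum_mul]
      conv_rhs => rw [refl_sum]
      refine Finset.sum_congr rfl fun n hn => ?_
      simp only [Finset.mem_Icc] at hm hn
      have hm2 : ((N:ℤ) + 1 - ((N+1-m : ℕ):ℤ)) = (m:ℤ) := by omega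
      have hn2 : ((N:ℤ) + 1 - ((N+1-n : ℕ):ℤ)) = (n:ℤ) := by omega
      rw [hm2, hn2, map_mul, hconj1]
      linear_combination ((starRingEnd ℂ) (a (m:ℤ)) * a (n:ℤ)) * e1 m n hm.2 hn.2
    have T4 : t x * (starRingEnd ℂ) (t y) * Complex.exp (Complex.I * ((N : ℂ) + 1) * ((x : ℂ) - (y : ℂ)))
        = ∑ m ∈ Finset.Icc 1 N, ∑ n ∈ Finset.Icc 1 N,
            (a (-((N:ℤ) + 1 - m)) * (starRingEnd ℂ) (a (-((N:ℤ) + 1 - n)))) *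
              (Complex.exp (Complex.I * (m:ℂ) * (x:ℂ)) * Complex.exp (-(Complex.I * (n:ℂ) * (y:ℂ)))) := by
      rw [ht x, ht y, map_sum, Finset.sum_mul_sum]
      rw [Finset.sum_mul]
      conv_rhs => rw [refl_sum]
      refine Finset.sum_congr rfl fun m hm => ?_
      rw [Finset.sum_mul]
      conv_rhs => rw [refl_sum]
      refine Finset.sum_congr rfl fun n hn => ?_
      simp only [Finset.mem_Icc] at hm hn
      have hm2 : ((N:ℤ) + 1 - ((N+1-m : ℕ):ℤ)) = (m:ℤ) := by omega
      have hn2 : ((N:ℤ) + 1 - ((N+1-n : ℕ):ℤ)) = (n:ℤ) := by omega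
      rw [hm2, hn2, map_mul, hconj2]
      linear_combination (a (-(m:ℤ)) * (starRingEnd ℂ) (a (-(n:ℤ)))) * e1 m n hm.2 hn.2
    rw [T1, T2, T3, T4]
    rw [← Finset.sum_sub_distrib, ← Finset.sum_add_distrib, ← Finset.sum_sub_distrib]
    refine Finset.sum_congr rfl fun m _ => ?_
    rw [← Finset.sum_sub_distrib, ← Finset.sum_add_distrib, ← Finset.sum_sub_distrib]
    refine Finset.sum_congr rfl fun n _ => ?_
    rw [hc]; ring
  constructor
  · intro h x y
    rw [key x y]
    refine Finset.sum_eq_zero fun m hm => Finset.sum_eq_zero fun n hn => ?_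
    simp only [Finset.mem_Icc] at hm hn
    have := h (m:ℤ) (n:ℤ) (by exact_mod_cast hm.1) (by exact_mod_cast hm.2)
      (by exact_mod_cast hn.1) (by exact_mod_cast hn.2)
    rw [hc]
    simp only at this ⊢
    rw [this, zero_mul]
  · intro h m n h1 h2 h3 h4
    have hzero : ∀ x y : ℝ, ∑ m ∈ Finset.Icc 1 N, ∑ n ∈ Finset.Icc 1 N,
        c m n * (Complex.exp (Complex.I * (m:ℂ) * (x:ℂ)) * Complex.exp (-(Complex.I * (n:ℂ) * (y:ℂ)))) = 0 := by
      intro x y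
      rw [← key x y]
      exact h x y
    have step1 : ∀ x : ℝ, ∀ n ∈ Finset.Icc 1 N,
        ∑ m ∈ Finset.Icc 1 N, c m n * Complex.exp (Complex.I * (m:ℂ) * (x:ℂ)) = 0 := by
      intro x
      apply coeff_zero_of_sum_exp N
        (fun n => ∑ m ∈ Finset.Icc 1 N, c m n * Complex.exp (Complex.I * (m:ℂ) * (x:ℂ)))
      intro y
      have := hzero x y
      rw [Finset.sum_comm] at this
      simpa [Finset.sum_mul, mul_assoc] using this
    have step2 : ∀ n ∈ Finset.Icc 1 N, ∀ m ∈ Finset.Icc 1 N, c m n = 0 := by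
      intro n hn
      apply coeff_zero_of_sum_exp N (fun m => c m n)
      intro y
      have := step1 (-y) n hn
      simpa [Complex.ofReal_neg, mul_neg] using this
    lift m to ℕ using (by omega) with m'
    lift n to ℕ using (by omega) with n'
    have hm : m' ∈ Finset.Icc 1 N := by
      simp only [Finset.mem_Icc]
      exact ⟨by exact_mod_cast h1, by exact_mod_cast h2⟩
    have hn'' : n' ∈ Finset.Icc 1 N := by
      simp only [Finset.mem_Icc]
      exact ⟨by exact_mod_cast h3, by exact_mod_cast h4⟩
    exact step2 n' hn'' m' hm
end

section
/- Let N ≥ 1 and let a : ℤ → ℂ. Define s(x) = ∑_{k=1}^{N} a k * exp(i k x) and t(x) = ∑_{k=1}^{N} a (-k) * exp(-i k x). If the (N+1)×(N+1) Toeplitz matrix T with entries T j k = a (j - k) is normal (T * Tᴴ = Tᴴ * T), then |s(x)| = |t(x)| for every real x. -/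
open Matrix Finset

private lemma sum_reflect (f : ℤ → ℂ) (A B : ℤ) :
    ∑ u ∈ Finset.Icc A B, f u = ∑ u ∈ Finset.Icc A B, f (A + B - u) := by
  refine Finset.sum_bij' (fun u _ => A + B - u) (fun u _ => A + B - u) ?_ ?_ ?_ ?_ ?_ <;>
    intro u hu <;> simp only [Finset.mem_Icc, Finset.mem_range] at hu ⊢ <;>
    first | omega | (congr 1; omega)

private lemma sum_range_int (f : ℤ → ℂ) (n : ℕ) :
    ∑ k ∈ Finset.range (n + 1), f (k : ℤ) = ∑ k ∈ Finset.Icc (0 : ℤ) (n : ℤ), f k := by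
  refine Finset.sum_bij' (fun (k : ℕ) _ => (k : ℤ)) (fun (k : ℤ) _ => k.toNat) ?_ ?_ ?_ ?_ ?_ <;>
    intro u hu <;> simp only [Finset.mem_Icc, Finset.mem_range] at hu ⊢ <;>
    first | omega | (congr 1; omega)

private lemma sum_Icc_nat_int (f : ℤ → ℂ) (n : ℕ) :
    ∑ k ∈ Finset.Icc 1 n, f (k : ℤ) = ∑ k ∈ Finset.Icc (1 : ℤ) (n : ℤ), f k := by
  refine Finset.sum_bij' (fun (k : ℕ) _ => (k : ℤ)) (fun (k : ℤ) _ => k.toNat) ?_ ?_ ?_ ?_ ?_ <;>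
    intro u hu <;> simp only [Finset.mem_Icc, Finset.mem_range] at hu ⊢ <;>
    first | omega | (congr 1; omega)

private lemma key_lemma (N : ℕ) (a : ℤ → ℂ) (T : Matrix (Fin (N+1)) (Fin (N+1)) ℂ)
    (hT : ∀ j k : Fin (N + 1), T j k = a ((j : ℤ) - (k : ℤ)))
    (hnormal : T * Tᴴ = Tᴴ * T) (d : ℕ) (hd : d ≤ N) :
    ∑ m ∈ Finset.Icc (1:ℤ) ((N:ℤ) - d), a (m + d) * (starRingEnd ℂ) (a m)
      = ∑ m ∈ Finset.Icc (1:ℤ) ((N:ℤ) - d), a (-m) * (starRingEnd ℂ) (a (-(m + d))) := by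
  set g : ℤ → ℂ := fun u => a u * (starRingEnd ℂ) (a (u - d)) with hg
  have h := congrFun (congrFun hnormal ⟨N, by omega⟩) ⟨N - d, by omega⟩
  rw [Matrix.mul_apply, Matrix.mul_apply] at h
  simp only [Matrix.conjTranspose_apply, hT, Complex.star_def] at h
  rw [Nat.cast_sub hd] at h
  rw [Fin.sum_univ_eq_sum_range (fun k : ℕ => a ((N:ℤ) - k) * (starRingEnd ℂ) (a ((N:ℤ) - (d:ℤ) - k))) (N+1)] at h
  rw [Fin.sum_univ_eq_sum_range (fun k : ℕ => (starRingEnd ℂ) (a ((k:ℤ) - N)) * a ((k:ℤ) - ((N:ℤ) - d))) (N+1)] at h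
  rw [sum_range_int (fun k : ℤ => a ((N:ℤ) - k) * (starRingEnd ℂ) (a ((N:ℤ) - (d:ℤ) - k))) N] at h
  rw [sum_range_int (fun k : ℤ => (starRingEnd ℂ) (a ((k:ℤ) - N)) * a ((k:ℤ) - ((N:ℤ) - d))) N] at h
  have hL : ∑ k ∈ Finset.Icc (0:ℤ) (N:ℤ), a ((N:ℤ) - k) * (starRingEnd ℂ) (a ((N:ℤ) - (d:ℤ) - k))
      = ∑ u ∈ Finset.Icc (0:ℤ) (N:ℤ), g u := by
    rw [sum_reflect g 0 (N:ℤ)]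
    refine Finset.sum_congr rfl fun k hk => ?_
    rw [hg]
    have e1 : (0:ℤ) + (N:ℤ) - k = (N:ℤ) - k := by ring
    have e2 : (N:ℤ) - (d:ℤ) - k = ((N:ℤ) - k) - d := by ring
    rw [e1, e2]
  have hR : ∑ k ∈ Finset.Icc (0:ℤ) (N:ℤ), (starRingEnd ℂ) (a ((k:ℤ) - N)) * a (k - ((N:ℤ) - d))
      = ∑ v ∈ Finset.Icc ((d:ℤ) - N) (d:ℤ), g v := by
    refine Finset.sum_bij' (fun k _ => k - ((N:ℤ) - (d:ℤ))) (fun v _ => v + ((N:ℤ) - (d:ℤ))) ?_ ?_ ?_ ?_ ?_ <;>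
      intro u hu <;> simp only [Finset.mem_Icc] at hu ⊢ <;> try omega
    have e1 : u - (N:ℤ) = (u - ((N:ℤ) - d)) - d := by ring
    rw [hg, e1, mul_comm]
  rw [hL, hR] at h
  have hd' : (0:ℤ) ≤ (d:ℤ) := by positivity
  have hdN : (d:ℤ) ≤ (N:ℤ) := by exact_mod_cast hd
  have split1 : ∑ u ∈ Finset.Icc (0:ℤ) (N:ℤ), g u
      = ∑ u ∈ Finset.Icc (0:ℤ) (d:ℤ), g u + ∑ u ∈ Finset.Icc ((d:ℤ)+1) (N:ℤ), g u := by
    rw [← Finset.sum_union (by simp only [Finset.disjoint_left, Finset.mem_Icc]; omega)]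
    apply Finset.sum_congr _ fun u _ => rfl
    ext u; simp only [Finset.mem_Icc, Finset.mem_union]; omega
  have split2 : ∑ v ∈ Finset.Icc ((d:ℤ) - N) (d:ℤ), g v
      = ∑ v ∈ Finset.Icc ((d:ℤ) - N) (-1:ℤ), g v + ∑ v ∈ Finset.Icc (0:ℤ) (d:ℤ), g v := by
    rw [← Finset.sum_union (by simp only [Finset.disjoint_left, Finset.mem_Icc]; omega)]
    apply Finset.sum_congr _ fun u _ => rfl
    ext u; simp only [Finset.mem_Icc, Finset.mem_union]; omega
  rw [split1, split2] at h
  have h2 : ∑ u ∈ Finset.Icc ((d:ℤ)+1) (N:ℤ), g u = ∑ v ∈ Finset.Icc ((d:ℤ) - N) (-1:ℤ), g v := by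
    linear_combination h
  have hL2 : ∑ m ∈ Finset.Icc (1:ℤ) ((N:ℤ) - d), a (m + d) * (starRingEnd ℂ) (a m)
      = ∑ u ∈ Finset.Icc ((d:ℤ)+1) (N:ℤ), g u := by
    refine Finset.sum_bij' (fun m _ => m + (d:ℤ)) (fun u _ => u - (d:ℤ)) ?_ ?_ ?_ ?_ ?_ <;>
      intro u hu <;> simp only [Finset.mem_Icc] at hu ⊢ <;> try omega
    rw [hg]; simp only []; rw [add_sub_cancel_right]
  have hR2 : ∑ m ∈ Finset.Icc (1:ℤ) ((N:ℤ) - d), a (-m) * (starRingEnd ℂ) (a (-(m + d)))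
      = ∑ v ∈ Finset.Icc ((d:ℤ) - N) (-1:ℤ), g v := by
    refine Finset.sum_bij' (fun m _ => -m) (fun v _ => -v) ?_ ?_ ?_ ?_ ?_ <;>
      intro u hu <;> simp only [Finset.mem_Icc] at hu ⊢ <;> try omega
    have e1 : -(u + (d:ℤ)) = -u - d := by ring
    rw [hg, e1]
  rw [hL2, hR2, h2]

private lemma keyZ (N : ℕ) (a : ℤ → ℂ) (T : Matrix (Fin (N+1)) (Fin (N+1)) ℂ)
    (hT : ∀ j k : Fin (N + 1), T j k = a ((j : ℤ) - (k : ℤ)))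
    (hnormal : T * Tᴴ = Tᴴ * T) (d : ℤ) (hd : 0 ≤ d) :
    ∑ m ∈ Finset.Icc (1:ℤ) ((N:ℤ) - d),
      (a (m + d) * (starRingEnd ℂ) (a m) - a (-m) * (starRingEnd ℂ) (a (-(m + d)))) = 0 := by
  by_cases hdN : d ≤ (N:ℤ)
  · have hk := key_lemma N a T hT hnormal d.toNat (by omega)
    have hc : ((d.toNat : ℕ) : ℤ) = d := Int.toNat_of_nonneg hd
    rw [hc] at hk
    rw [Finset.sum_sub_distrib, hk, sub_self]
  · rw [Finset.Icc_eq_empty (by omega), Finset.sum_empty]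

private lemma keyNeg (N : ℕ) (a : ℤ → ℂ) (T : Matrix (Fin (N+1)) (Fin (N+1)) ℂ)
    (hT : ∀ j k : Fin (N + 1), T j k = a ((j : ℤ) - (k : ℤ)))
    (hnormal : T * Tᴴ = Tᴴ * T) (d : ℤ) (hd : d < 0) :
    ∑ m ∈ Finset.Icc (1 - d) (N:ℤ),
      (a (m + d) * (starRingEnd ℂ) (a m) - a (-m) * (starRingEnd ℂ) (a (-(m + d)))) = 0 := by
  have h0 := keyZ N a T hT hnormal (-d) (by omega)
  have step1 : ∑ m ∈ Finset.Icc (1 - d) (N:ℤ),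
      (a (m + d) * (starRingEnd ℂ) (a m) - a (-m) * (starRingEnd ℂ) (a (-(m + d))))
      = ∑ k ∈ Finset.Icc (1:ℤ) ((N:ℤ) - -d),
        (a k * (starRingEnd ℂ) (a (k - d)) - a (-(k - d)) * (starRingEnd ℂ) (a (-k))) := by
    refine Finset.sum_bij' (fun m _ => m + d) (fun k _ => k - d) ?_ ?_ ?_ ?_ ?_ <;>
      intro u hu <;> simp only [Finset.mem_Icc] at hu ⊢ <;> try omega
    have e1 : u + d - d = u := by ring
    rw [e1]
  rw [step1, ← map_zero (starRingEnd ℂ), ← h0, map_sum]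
  refine Finset.sum_congr rfl fun k hk => ?_
  have e1 : k + -d = k - d := by ring
  rw [e1]
  simp only [map_sub, _root_.map_mul, Complex.conj_conj]
  ring

open Matrix

theorem normal_toeplitz_abs_s_eq_abs_t (N : ℕ) (hN : 1 ≤ N) (a : ℤ → ℂ)
    (s t : ℝ → ℂ)
    (hs : ∀ x : ℝ, s x = ∑ k ∈ Finset.Icc 1 N, a (k : ℤ) * Complex.exp (Complex.I * (k : ℂ) * (x : ℂ)))
    (ht : ∀ x : ℝ, t x = ∑ k ∈ Finset.Icc 1 N, a (-(k : ℤ)) * Complex.exp (-(Complex.I * (k : ℂ) * (x : ℂ))))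
    (T : Matrix (Fin (N + 1)) (Fin (N + 1)) ℂ)
    (hT : ∀ j k : Fin (N + 1), T j k = a ((j : ℤ) - (k : ℤ)))
    (hnormal : T * Tᴴ = Tᴴ * T) :
    ∀ x : ℝ, ‖s x‖ = ‖t x‖ := by
  -- the fiberwise sums of the "difference coefficients" vanish
  have hfib : ∀ dd : ℤ,
      ∑ p ∈ ((Finset.Icc (1:ℤ) (N:ℤ)) ×ˢ (Finset.Icc (1:ℤ) (N:ℤ))).filter
          (fun p => p.1 - p.2 = dd),
        (a p.1 * (starRingEnd ℂ) (a p.2) - a (-p.2) * (starRingEnd ℂ) (a (-p.1))) = 0 := by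
    intro dd
    have hb : ∑ p ∈ ((Finset.Icc (1:ℤ) (N:ℤ)) ×ˢ (Finset.Icc (1:ℤ) (N:ℤ))).filter
          (fun p => p.1 - p.2 = dd),
        (a p.1 * (starRingEnd ℂ) (a p.2) - a (-p.2) * (starRingEnd ℂ) (a (-p.1)))
        = ∑ m ∈ Finset.Icc (max 1 (1 - dd)) (min (N:ℤ) ((N:ℤ) - dd)),
            (a (m + dd) * (starRingEnd ℂ) (a m) - a (-m) * (starRingEnd ℂ) (a (-(m + dd)))) := by
      refine Finset.sum_bij' (fun p _ => p.2) (fun m _ => (m + dd, m)) ?_ ?_ ?_ ?_ ?_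
      · intro p hp
        simp only [Finset.mem_filter, Finset.mem_product, Finset.mem_Icc] at hp ⊢
        constructor
        · exact max_le (by omega) (by omega)
        · exact le_min (by omega) (by omega)
      · intro m hm
        simp only [Finset.mem_Icc, max_le_iff, le_min_iff] at hm
        simp only [Finset.mem_filter, Finset.mem_product, Finset.mem_Icc]
        omega
      · intro p hp
        simp only [Finset.mem_filter, Finset.mem_product, Finset.mem_Icc] at hp
        have h2 : p.2 + dd = p.1 := by omega
        exact Prod.ext h2 rfl
      · intro m hm
        rfl
      · intro p hp
        simp only [Finset.mem_filter, Finset.mem_product, Finset.mem_Icc] at hp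
        have h1 : p.1 = p.2 + dd := by omega
        rw [h1]
    rcases le_or_gt 0 dd with hdd | hdd
    · rw [hb, max_eq_left (by omega), min_eq_right (by omega)]
      exact keyZ N a T hT hnormal dd hdd
    · rw [hb, max_eq_right (by omega), min_eq_left (by omega)]
      exact keyNeg N a T hT hnormal dd hdd
  intro x
  set E : ℤ → ℂ := fun dd => Complex.exp (Complex.I * (dd : ℂ) * (x : ℂ)) with hE
  have hEmul : ∀ c e : ℤ, E c * E e = E (c + e) := by
    intro c e
    rw [hE]
    simp only [← Complex.exp_add]
    congr 1
    push_cast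
    ring
  have hEconj : ∀ c : ℤ, (starRingEnd ℂ) (E c) = E (-c) := by
    intro c
    rw [hE]
    simp only []
    rw [← Complex.exp_conj]
    congr 1
    simp only [_root_.map_mul, Complex.conj_I, Complex.conj_ofReal, map_intCast]
    push_cast
    ring
  have hsx : s x = ∑ k ∈ Finset.Icc (1:ℤ) (N:ℤ), a k * E k := by
    rw [hs x, ← sum_Icc_nat_int (fun k => a k * E k) N]
    refine Finset.sum_congr rfl fun k hk => ?_
    rw [hE]
    push_cast
    ring_nf
  have htx : t x = ∑ k ∈ Finset.Icc (1:ℤ) (N:ℤ), a (-k) * E (-k) := by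
    rw [ht x, ← sum_Icc_nat_int (fun k => a (-k) * E (-k)) N]
    refine Finset.sum_congr rfl fun k hk => ?_
    rw [hE]
    push_cast
    ring_nf
  have hss : s x * (starRingEnd ℂ) (s x)
      = ∑ k ∈ Finset.Icc (1:ℤ) (N:ℤ), ∑ m ∈ Finset.Icc (1:ℤ) (N:ℤ),
          (a k * (starRingEnd ℂ) (a m)) * E (k - m) := by
    rw [hsx, map_sum, Finset.sum_mul]
    refine Finset.sum_congr rfl fun k hk => ?_
    rw [Finset.mul_sum]
    refine Finset.sum_congr rfl fun m hm => ?_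
    rw [_root_.map_mul, hEconj m]
    have h1 := hEmul k (-m)
    have h2 : k + -m = k - m := by ring
    rw [h2] at h1
    rw [← h1]
    ring
  have htt' : t x * (starRingEnd ℂ) (t x)
      = ∑ k ∈ Finset.Icc (1:ℤ) (N:ℤ), ∑ m ∈ Finset.Icc (1:ℤ) (N:ℤ),
          (a (-k) * (starRingEnd ℂ) (a (-m))) * E (m - k) := by
    rw [htx, map_sum, Finset.sum_mul]
    refine Finset.sum_congr rfl fun k hk => ?_
    rw [Finset.mul_sum]
    refine Finset.sum_congr rfl fun m hm => ?_
    rw [_root_.map_mul, hEconj (-m)]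
    have h1 := hEmul (-k) (- -m)
    have h2 : -k + - -m = m - k := by ring
    rw [h2] at h1
    rw [← h1]
    ring
  have htt : t x * (starRingEnd ℂ) (t x)
      = ∑ k ∈ Finset.Icc (1:ℤ) (N:ℤ), ∑ m ∈ Finset.Icc (1:ℤ) (N:ℤ),
          (a (-m) * (starRingEnd ℂ) (a (-k))) * E (k - m) :=
    htt'.trans Finset.sum_comm
  have hdiff : s x * (starRingEnd ℂ) (s x) - t x * (starRingEnd ℂ) (t x)
      = ∑ p ∈ (Finset.Icc (1:ℤ) (N:ℤ)) ×ˢ (Finset.Icc (1:ℤ) (N:ℤ)),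
          (a p.1 * (starRingEnd ℂ) (a p.2) - a (-p.2) * (starRingEnd ℂ) (a (-p.1))) * E (p.1 - p.2) := by
    rw [hss, htt, Finset.sum_product, ← Finset.sum_sub_distrib]
    refine Finset.sum_congr rfl fun k hk => ?_
    rw [← Finset.sum_sub_distrib]
    refine Finset.sum_congr rfl fun m hm => ?_
    dsimp only
    ring
  have hzero : ∑ p ∈ (Finset.Icc (1:ℤ) (N:ℤ)) ×ˢ (Finset.Icc (1:ℤ) (N:ℤ)),
          (a p.1 * (starRingEnd ℂ) (a p.2) - a (-p.2) * (starRingEnd ℂ) (a (-p.1))) * E (p.1 - p.2) = 0 := by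
    have hmaps : ∀ p ∈ (Finset.Icc (1:ℤ) (N:ℤ)) ×ˢ (Finset.Icc (1:ℤ) (N:ℤ)),
        (fun p : ℤ × ℤ => p.1 - p.2) p ∈ Finset.Icc (1 - (N:ℤ)) ((N:ℤ) - 1) := by
      intro p hp
      simp only [Finset.mem_product, Finset.mem_Icc] at hp ⊢
      omega
    rw [← Finset.sum_fiberwise_of_maps_to hmaps]
    refine Finset.sum_eq_zero fun dd hdd => ?_
    have hcongr : ∀ p ∈ ((Finset.Icc (1:ℤ) (N:ℤ)) ×ˢ (Finset.Icc (1:ℤ) (N:ℤ))).filter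
          (fun p => p.1 - p.2 = dd),
        (a p.1 * (starRingEnd ℂ) (a p.2) - a (-p.2) * (starRingEnd ℂ) (a (-p.1))) * E (p.1 - p.2)
          = (a p.1 * (starRingEnd ℂ) (a p.2) - a (-p.2) * (starRingEnd ℂ) (a (-p.1))) * E dd := by
      intro p hp
      rw [(Finset.mem_filter.1 hp).2]
    rw [Finset.sum_congr rfl hcongr, ← Finset.sum_mul, hfib dd, zero_mul]
  have hfin : s x * (starRingEnd ℂ) (s x) = t x * (starRingEnd ℂ) (t x) :=
    sub_eq_zero.mp (hdiff.trans hzero)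
  rw [Complex.mul_conj, Complex.mul_conj] at hfin
  have hnsq : Complex.normSq (s x) = Complex.normSq (t x) := by exact_mod_cast hfin
  rw [Complex.norm_def, Complex.norm_def, hnsq]
end

section
/- Let N ≥ 1 and let a : ℤ → ℂ. Define s(x) = ∑_{k=1}^{N} a k * exp(i k x) and t(x) = ∑_{k=1}^{N} a (-k) * exp(-i k x). Suppose that for all real x and y: s(x) * conj(s(y)) - conj(t(x)) * t(y) + conj(s(x)) * s(y) * exp(i (N+1) (x - y)) - t(x) * conj(t(y)) * exp(i (N+1) (x - y)) = 0. Let x₀ ∈ ℝ with t(x₀) ≠ 0, and let α, β ∈ ℂ with |α| = |β| = 1 satisfy s(x₀) = α * t(x₀) and t(x₀) = β * conj(t(x₀)). Then for every real x: (s(x) - α * exp(i (N+1) (x - x₀)) * t(x)) * (conj(s(x)) - conj(α) * conj(β) * t(x)) = 0. -/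
theorem trig_identity_factorization (N : ℕ) (hN : 1 ≤ N) (a : ℤ → ℂ)
    (s t : ℝ → ℂ)
    (hs : ∀ x : ℝ, s x = ∑ k ∈ Finset.Icc 1 N, a (k : ℤ) * Complex.exp (Complex.I * (k : ℂ) * (x : ℂ)))
    (ht : ∀ x : ℝ, t x = ∑ k ∈ Finset.Icc 1 N, a (-(k : ℤ)) * Complex.exp (-(Complex.I * (k : ℂ) * (x : ℂ))))
    (hid : ∀ x y : ℝ,
        s x * (starRingEnd ℂ) (s y) - (starRingEnd ℂ) (t x) * t y
          + (starRingEnd ℂ) (s x) * s y * Complex.exp (Complex.I * ((N : ℂ) + 1) * ((x : ℂ) - (y : ℂ)))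
          - t x * (starRingEnd ℂ) (t y) * Complex.exp (Complex.I * ((N : ℂ) + 1) * ((x : ℂ) - (y : ℂ))) = 0)
    (x₀ : ℝ) (hx₀ : t x₀ ≠ 0) (α β : ℂ)
    (hα : ‖α‖ = 1) (hβ : ‖β‖ = 1)
    (hαt : s x₀ = α * t x₀) (hβt : t x₀ = β * (starRingEnd ℂ) (t x₀)) :
    ∀ x : ℝ,
      (s x - α * Complex.exp (Complex.I * ((N : ℂ) + 1) * ((x : ℂ) - (x₀ : ℂ))) * t x) *
        ((starRingEnd ℂ) (s x) - (starRingEnd ℂ) α * (starRingEnd ℂ) β * t x) = 0 := by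
  intro x
  set c := starRingEnd ℂ
  set E := Complex.exp (Complex.I * ((N : ℂ) + 1) * ((x : ℂ) - (x₀ : ℂ))) with hE
  set u := c (t x₀) with hu
  have hu0 : u ≠ 0 := by
    simp only [hu, c, ne_eq, map_eq_zero]
    exact hx₀
  have hβ0 : β ≠ 0 := by
    intro h
    rw [h] at hβ
    simp at hβ
  have hαα : α * c α = 1 := by
    simp only [c, Complex.mul_conj, Complex.normSq_eq_norm_sq, hα]
    norm_num
  have hββ : β * c β = 1 := by
    simp only [c, Complex.mul_conj, Complex.normSq_eq_norm_sq, hβ]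
    norm_num
  have hcs0 : c (s x₀) = c α * u := by
    rw [hαt]; simp [c, hu]
  -- |s x|^2 = |t x|^2
  have h1 := hid x x
  rw [show ((x : ℂ) - (x : ℂ)) = 0 from sub_self _, mul_zero, Complex.exp_zero] at h1
  have hss : s x * c (s x) = t x * c (t x) := by
    simp only [c] at h1 ⊢
    linear_combination h1 / 2
  have h2 := hid x x₀
  rw [← hE] at h2
  simp only [← hu, c] at h2 hcs0 hβt hαt
  have key : β * u * ((s x - α * E * t x) *
      (c (s x) - c α * c β * t x)) = 0 := by
    simp only [c]
    linear_combination (-(t x)) * h2 + (t x * s x) * hcs0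
      + ((α * E * (starRingEnd ℂ) (s x) - (starRingEnd ℂ) (t x)) * t x) * hβt
      + (t x * (starRingEnd ℂ) (s x) * E) * hαt
      - (u * t x * ((starRingEnd ℂ) α * s x - E * t x)) * hββ
      + (β * u) * hss + (β * (starRingEnd ℂ) β * u * E * (t x)^2) * hαα
  have := mul_ne_zero hβ0 hu0
  exact (mul_eq_zero.mp key).resolve_left this
end

section
/- Let N ≥ 1 and let a : ℤ → ℝ. The (N+1)×(N+1) real Toeplitz matrix T with entries T j k = a (j - k) is normal (T * Tᵀ = Tᵀ * T) if and only if for all m, n with 1 ≤ m, n ≤ N: a m * a n - a (-m) * a (-n) + a (N+1-m) * a (N+1-n) - a (-(N+1-m)) * a (-(N+1-n)) = 0. -/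
open Matrix Finset

def tF (N : ℕ) (a : ℤ → ℝ) (j k : ℤ) : ℝ :=
  ∑ s ∈ Finset.range (N+1), (a (j - s) * a (k - s) - a ((s:ℤ) - j) * a ((s:ℤ) - k))

lemma tF_rec (N : ℕ) (a : ℤ → ℝ) (j k : ℤ) :
    tF N a j k - tF N a (j-1) (k-1) =
      a j * a k - a (-j) * a (-k) + a ((N:ℤ)+1-j) * a ((N:ℤ)+1-k)
        - a (-((N:ℤ)+1-j)) * a (-((N:ℤ)+1-k)) := by
  have h1 : tF N a j k
      = (∑ s ∈ Finset.range N, (a (j - (s+1:ℕ)) * a (k - (s+1:ℕ))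
          - a ((s+1:ℕ) - j) * a ((s+1:ℕ) - k)))
        + (a (j - (0:ℕ)) * a (k - (0:ℕ)) - a ((0:ℕ) - j) * a ((0:ℕ) - k)) :=
    Finset.sum_range_succ' _ N
  have h2 : tF N a (j-1) (k-1)
      = (∑ s ∈ Finset.range N, (a ((j-1) - s) * a ((k-1) - s)
          - a ((s:ℤ) - (j-1)) * a ((s:ℤ) - (k-1))))
        + (a ((j-1) - (N:ℤ)) * a ((k-1) - (N:ℤ)) - a ((N:ℤ) - (j-1)) * a ((N:ℤ) - (k-1))) :=
    Finset.sum_range_succ _ N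
  have h3 : ∀ s ∈ Finset.range N,
      (a (j - (s+1:ℕ)) * a (k - (s+1:ℕ)) - a ((s+1:ℕ) - j) * a ((s+1:ℕ) - k))
      = (a ((j-1) - s) * a ((k-1) - s) - a ((s:ℤ) - (j-1)) * a ((s:ℤ) - (k-1))) := by
    intro s _
    push_cast
    ring_nf
  rw [h1, h2, Finset.sum_congr rfl h3]
  simp only [Nat.cast_zero, sub_zero, zero_sub]
  rw [show j-1-(N:ℤ) = -((N:ℤ)+1-j) by ring, show k-1-(N:ℤ) = -((N:ℤ)+1-k) by ring,
    show (N:ℤ)-(j-1) = (N:ℤ)+1-j by ring, show (N:ℤ)-(k-1) = (N:ℤ)+1-k by ring]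
  ring

lemma tF_reflect (N : ℕ) (a : ℤ → ℝ) (j k : ℤ) :
    tF N a ((N:ℤ)-k) ((N:ℤ)-j) = - tF N a j k := by
  unfold tF
  rw [← Finset.sum_range_reflect, ← Finset.sum_neg_distrib]
  refine Finset.sum_congr rfl ?_
  intro s hs
  simp only [Finset.mem_range] at hs
  have hsN : s ≤ N := by omega
  have hcast : ((N + 1 - 1 - s : ℕ) : ℤ) = (N:ℤ) - s := by omega
  rw [hcast]
  rw [show (N:ℤ)-k-((N:ℤ)-s) = (s:ℤ)-k by ring, show (N:ℤ)-j-((N:ℤ)-s) = (s:ℤ)-j by ring,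
    show (N:ℤ)-s-((N:ℤ)-k) = k-s by ring, show (N:ℤ)-s-((N:ℤ)-j) = j-s by ring,
    show (k:ℤ)-s = -(s-k) by ring, show (j:ℤ)-s = -(s-j) by ring]
  ring

lemma tF_telescope (N : ℕ) (a : ℤ → ℝ) (j k : ℤ) (r : ℕ) :
    tF N a j k - tF N a (j - r) (k - r)
      = ∑ i ∈ Finset.range r,
          (a (j-i) * a (k-i) - a (-(j-i)) * a (-(k-i))
            + a ((N:ℤ)+1-(j-i)) * a ((N:ℤ)+1-(k-i))
            - a (-((N:ℤ)+1-(j-i))) * a (-((N:ℤ)+1-(k-i)))) := by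
  induction r with
  | zero => simp
  | succ r ih =>
    rw [Finset.sum_range_succ, ← ih]
    have h := tF_rec N a (j - r) (k - r)
    have e1 : j - ((r:ℕ)+1:ℕ) = (j - r) - 1 := by push_cast; ring
    have e2 : k - ((r:ℕ)+1:ℕ) = (k - r) - 1 := by push_cast; ring
    rw [e1, e2]
    linarith [h]

lemma tF_zero (N : ℕ) (a : ℤ → ℝ)
    (hcond : ∀ m n : ℤ, 1 ≤ m → m ≤ N → 1 ≤ n → n ≤ N →
      a m * a n - a (-m) * a (-n)
        + a ((N : ℤ) + 1 - m) * a ((N : ℤ) + 1 - n)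
        - a (-((N : ℤ) + 1 - m)) * a (-((N : ℤ) + 1 - n)) = 0)
    (j k : ℤ) (hj0 : 0 ≤ j) (hjN : j ≤ N) (hk0 : 0 ≤ k) (hkN : k ≤ N) :
    tF N a j k = 0 := by
  -- first the case j + k ≥ N
  have main : ∀ j k : ℤ, 0 ≤ j → j ≤ N → 0 ≤ k → k ≤ N → (N:ℤ) ≤ j + k → tF N a j k = 0 := by
    intro j k hj0 hjN hk0 hkN hsum
    set r : ℕ := (j + k - N).toNat with hr
    have hrz : (r : ℤ) = j + k - N := by omega
    have ht := tF_telescope N a j k r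
    have hz : ∑ i ∈ Finset.range r,
          (a (j-i) * a (k-i) - a (-(j-i)) * a (-(k-i))
            + a ((N:ℤ)+1-(j-i)) * a ((N:ℤ)+1-(k-i))
            - a (-((N:ℤ)+1-(j-i))) * a (-((N:ℤ)+1-(k-i)))) = 0 := by
      refine Finset.sum_eq_zero ?_
      intro i hi
      simp only [Finset.mem_range] at hi
      exact hcond (j-i) (k-i) (by omega) (by omega) (by omega) (by omega)
    rw [hz] at ht
    have hjr : j - r = (N:ℤ) - k := by omega
    have hkr : k - r = (N:ℤ) - j := by omega
    rw [hjr, hkr, tF_reflect] at ht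
    linarith
  rcases le_or_gt (N:ℤ) (j + k) with h | h
  · exact main j k hj0 hjN hk0 hkN h
  · have := main ((N:ℤ)-k) ((N:ℤ)-j) (by omega) (by omega) (by omega) (by omega) (by omega)
    rw [tF_reflect] at this
    linarith

theorem real_normal_toeplitz_iff_condition (N : ℕ) (hN : 1 ≤ N) (a : ℤ → ℝ)
    (T : Matrix (Fin (N + 1)) (Fin (N + 1)) ℝ)
    (hT : ∀ j k : Fin (N + 1), T j k = a ((j : ℤ) - (k : ℤ))) :
    T * Tᵀ = Tᵀ * T ↔
      ∀ m n : ℤ, 1 ≤ m → m ≤ N → 1 ≤ n → n ≤ N →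
        a m * a n - a (-m) * a (-n)
          + a ((N : ℤ) + 1 - m) * a ((N : ℤ) + 1 - n)
          - a (-((N : ℤ) + 1 - m)) * a (-((N : ℤ) + 1 - n)) = 0 := by
  have hFT : ∀ j k : Fin (N+1), (T * Tᵀ) j k - (Tᵀ * T) j k = tF N a (j:ℤ) (k:ℤ) := by
    intro j k
    simp only [Matrix.mul_apply, Matrix.transpose_apply, hT]
    rw [tF, Finset.sum_sub_distrib]
    congr 1
    · rw [← Fin.sum_univ_eq_sum_range (fun s => a ((j:ℤ) - (s:ℕ)) * a ((k:ℤ) - (s:ℕ))) (N+1)]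
    · rw [← Fin.sum_univ_eq_sum_range (fun s => a ((s:ℕ) - (j:ℤ)) * a ((s:ℕ) - (k:ℤ))) (N+1)]
  constructor
  · intro h
    have hF0 : ∀ j k : ℤ, 0 ≤ j → j ≤ N → 0 ≤ k → k ≤ N → tF N a j k = 0 := by
      intro j k hj0 hjN hk0 hkN
      have h1 := hFT ⟨j.toNat, by omega⟩ ⟨k.toNat, by omega⟩
      rw [h] at h1
      simp only [sub_self] at h1
      have e1 : ((⟨j.toNat, by omega⟩ : Fin (N+1)) : ℤ) = j := by simp; omega
      have e2 : ((⟨k.toNat, by omega⟩ : Fin (N+1)) : ℤ) = k := by simp; omega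
      rw [e1, e2] at h1
      exact h1.symm
    intro m n hm1 hmN hn1 hnN
    have hr := tF_rec N a m n
    rw [hF0 m n (by omega) (by omega) (by omega) (by omega),
      hF0 (m-1) (n-1) (by omega) (by omega) (by omega) (by omega)] at hr
    linarith
  · intro hcond
    ext j k
    have h1 := hFT j k
    rw [tF_zero N a hcond (j:ℤ) (k:ℤ) (by omega) (by omega) (by omega) (by omega)] at h1
    linarith
end

section
/- Let N ≥ 1 and let a : ℤ → ℝ. Define p(x) = ∑_{k=1}^{N} a k * x^k, q(x) = ∑_{k=1}^{N} a (-k) * x^k, p̃(x) = ∑_{k=1}^{N} a (N+1-k) * x^k, q̃(x) = ∑_{k=1}^{N} a (-(N+1-k)) * x^k. If the (N+1)×(N+1) real Toeplitz matrix T with entries T j k = a (j - k) is normal (T * Tᵀ = Tᵀ * T), then p(x) * p̃(x) = q(x) * q̃(x) for all real x. -/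
open Matrix

private lemma toeplitz_step1 (N : ℕ) (b : ℤ → ℝ) (x : ℝ) :
    (∑ k ∈ Finset.Icc 1 N, b (k : ℤ) * x ^ k) *
      (∑ k ∈ Finset.Icc 1 N, b ((N : ℤ) + 1 - (k : ℤ)) * x ^ k)
    = x * ∑ kl ∈ (Finset.Icc 1 N ×ˢ Finset.Icc 1 N),
        b (kl.1 : ℤ) * b (kl.2 : ℤ) * x ^ (kl.1 + N - kl.2) := by
  have hpt' : (∑ k ∈ Finset.Icc 1 N, b ((N : ℤ) + 1 - (k : ℤ)) * x ^ k)
      = ∑ l ∈ Finset.Icc 1 N, b (l:ℤ) * x ^ (N + 1 - l) := by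
    refine Finset.sum_nbij' (fun k => N+1-k) (fun l => N+1-l) ?_ ?_ ?_ ?_ ?_
    · intro k hk; simp [Finset.mem_Icc] at hk ⊢; omega
    · intro k hk; simp [Finset.mem_Icc] at hk ⊢; omega
    · intro k hk; simp [Finset.mem_Icc] at hk; show N + 1 - (N + 1 - k) = k; omega
    · intro k hk; simp [Finset.mem_Icc] at hk; show N + 1 - (N + 1 - k) = k; omega
    · intro k hk; simp [Finset.mem_Icc] at hk
      show b ((N:ℤ) + 1 - k) * x ^ k = b (((N+1-k : ℕ)):ℤ) * x ^ (N + 1 - (N + 1 - k))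
      rw [show ((N+1-k : ℕ):ℤ) = (N:ℤ) + 1 - k by omega, show N + 1 - (N + 1 - k) = k by omega]
  rw [hpt', Finset.sum_mul_sum, Finset.mul_sum, Finset.sum_product]
  refine Finset.sum_congr rfl fun k hk => ?_
  refine Finset.sum_congr rfl fun l hl => ?_
  simp only [Finset.mem_Icc] at hk hl
  have h3 : x ^ k * x ^ (N + 1 - l) = x * x ^ (k + N - l) := by
    rw [← pow_add, ← pow_succ']
    congr 1; omega
  calc b (k:ℤ) * x ^ k * (b (l:ℤ) * x ^ (N + 1 - l))
      = b (k:ℤ) * b (l:ℤ) * (x ^ k * x ^ (N + 1 - l)) := by ring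
    _ = x * (b (k:ℤ) * b (l:ℤ) * x ^ (k + N - l)) := by rw [h3]; ring

private lemma toeplitz_step2 (N : ℕ) (hN : 1 ≤ N) (a : ℤ → ℝ) (x : ℝ)
    (key : ∀ d : ℕ, d ≤ N →
      ∑ k ∈ Finset.Icc 1 (N - d), a (k : ℤ) * a ((k : ℤ) + (d : ℤ))
        = ∑ k ∈ Finset.Icc 1 (N - d), a (-(k : ℤ)) * a (-((k : ℤ) + (d : ℤ)))) :
    ∑ kl ∈ (Finset.Icc 1 N ×ˢ Finset.Icc 1 N),
        a (kl.1 : ℤ) * a (kl.2 : ℤ) * x ^ (kl.1 + N - kl.2)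
      = ∑ kl ∈ (Finset.Icc 1 N ×ˢ Finset.Icc 1 N),
        a (-(kl.1 : ℤ)) * a (-(kl.2 : ℤ)) * x ^ (kl.1 + N - kl.2) := by
  have hmaps : ∀ kl ∈ (Finset.Icc 1 N ×ˢ Finset.Icc 1 N),
      (fun kl : ℕ × ℕ => kl.1 + N - kl.2) kl ∈ Finset.Icc 1 (2*N-1) := by
    intro kl hkl
    simp only [Finset.mem_product, Finset.mem_Icc] at hkl ⊢
    omega
  rw [← Finset.sum_fiberwise_of_maps_to hmaps (fun kl : ℕ × ℕ =>
        a (kl.1 : ℤ) * a (kl.2 : ℤ) * x ^ (kl.1 + N - kl.2)),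
      ← Finset.sum_fiberwise_of_maps_to hmaps (fun kl : ℕ × ℕ =>
        a (-(kl.1 : ℤ)) * a (-(kl.2 : ℤ)) * x ^ (kl.1 + N - kl.2))]
  refine Finset.sum_congr rfl fun t ht => ?_
  simp only [Finset.mem_Icc] at ht
  have hexp : ∀ (c : ℕ × ℕ → ℝ),
      ∑ kl ∈ (Finset.Icc 1 N ×ˢ Finset.Icc 1 N).filter
          (fun kl : ℕ × ℕ => kl.1 + N - kl.2 = t), c kl * x ^ (kl.1 + N - kl.2)
        = (∑ kl ∈ (Finset.Icc 1 N ×ˢ Finset.Icc 1 N).filter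
          (fun kl : ℕ × ℕ => kl.1 + N - kl.2 = t), c kl) * x ^ t := by
    intro c
    rw [Finset.sum_mul]
    refine Finset.sum_congr rfl fun kl hkl => ?_
    simp only [Finset.mem_filter] at hkl
    rw [hkl.2]
  rw [hexp (fun kl => a (kl.1 : ℤ) * a (kl.2 : ℤ)), hexp (fun kl => a (-(kl.1 : ℤ)) * a (-(kl.2 : ℤ)))]
  congr 1
  rcases le_or_gt N t with hcase | hcase
  · have e1 : ∑ kl ∈ (Finset.Icc 1 N ×ˢ Finset.Icc 1 N).filter
          (fun kl : ℕ × ℕ => kl.1 + N - kl.2 = t), a (kl.1 : ℤ) * a (kl.2 : ℤ)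
        = ∑ k ∈ Finset.Icc 1 (N - (t - N)), a ((k:ℤ) + ((t-N : ℕ):ℤ)) * a (k:ℤ) := by
      refine (Finset.sum_nbij' (fun k => (k + (t-N), k)) (fun kl => kl.2) ?_ ?_ ?_ ?_ ?_).symm
      · intro k hk; simp only [Finset.mem_Icc] at hk
        simp only [Finset.mem_filter, Finset.mem_product, Finset.mem_Icc]
        show ((1 ≤ k + (t - N) ∧ k + (t-N) ≤ N) ∧ 1 ≤ k ∧ k ≤ N) ∧ k + (t-N) + N - k = t
        omega
      · intro kl hkl; simp only [Finset.mem_filter, Finset.mem_product, Finset.mem_Icc] at hkl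
        simp only [Finset.mem_Icc]; show 1 ≤ kl.2 ∧ kl.2 ≤ N - (t - N); omega
      · intro k hk; rfl
      · intro kl hkl; simp only [Finset.mem_filter, Finset.mem_product, Finset.mem_Icc] at hkl
        show (kl.2 + (t - N), kl.2) = kl
        have : kl.1 = kl.2 + (t - N) := by omega
        ext <;> simp [this]
      · intro k hk; simp only [Finset.mem_Icc] at hk
        show a ((k:ℤ) + ((t-N : ℕ):ℤ)) * a (k:ℤ) = a ((k + (t-N) : ℕ):ℤ) * a (k:ℤ)
        rw [show ((k + (t-N) : ℕ):ℤ) = (k:ℤ) + ((t-N:ℕ):ℤ) by push_cast; ring]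
    have e2 : ∑ kl ∈ (Finset.Icc 1 N ×ˢ Finset.Icc 1 N).filter
          (fun kl : ℕ × ℕ => kl.1 + N - kl.2 = t), a (-(kl.1 : ℤ)) * a (-(kl.2 : ℤ))
        = ∑ k ∈ Finset.Icc 1 (N - (t - N)), a (-((k:ℤ) + ((t-N : ℕ):ℤ))) * a (-(k:ℤ)) := by
      refine (Finset.sum_nbij' (fun k => (k + (t-N), k)) (fun kl => kl.2) ?_ ?_ ?_ ?_ ?_).symm
      · intro k hk; simp only [Finset.mem_Icc] at hk
        simp only [Finset.mem_filter, Finset.mem_product, Finset.mem_Icc]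
        show ((1 ≤ k + (t - N) ∧ k + (t-N) ≤ N) ∧ 1 ≤ k ∧ k ≤ N) ∧ k + (t-N) + N - k = t
        omega
      · intro kl hkl; simp only [Finset.mem_filter, Finset.mem_product, Finset.mem_Icc] at hkl
        simp only [Finset.mem_Icc]; show 1 ≤ kl.2 ∧ kl.2 ≤ N - (t - N); omega
      · intro k hk; rfl
      · intro kl hkl; simp only [Finset.mem_filter, Finset.mem_product, Finset.mem_Icc] at hkl
        show (kl.2 + (t - N), kl.2) = kl
        have : kl.1 = kl.2 + (t - N) := by omega
        ext <;> simp [this]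
      · intro k hk; simp only [Finset.mem_Icc] at hk
        show a (-((k:ℤ) + ((t-N : ℕ):ℤ))) * a (-(k:ℤ)) = a (-((k + (t-N) : ℕ):ℤ)) * a (-(k:ℤ))
        rw [show ((k + (t-N) : ℕ):ℤ) = (k:ℤ) + ((t-N:ℕ):ℤ) by push_cast; ring]
    rw [e1, e2]
    have hkey := key (t - N) (by omega)
    calc ∑ k ∈ Finset.Icc 1 (N - (t - N)), a ((k:ℤ) + ((t-N : ℕ):ℤ)) * a (k:ℤ)
        = ∑ k ∈ Finset.Icc 1 (N - (t - N)), a (k:ℤ) * a ((k:ℤ) + ((t-N : ℕ):ℤ)) :=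
          Finset.sum_congr rfl fun k _ => mul_comm _ _
      _ = ∑ k ∈ Finset.Icc 1 (N - (t - N)), a (-(k:ℤ)) * a (-((k:ℤ) + ((t-N : ℕ):ℤ))) := hkey
      _ = ∑ k ∈ Finset.Icc 1 (N - (t - N)), a (-((k:ℤ) + ((t-N : ℕ):ℤ))) * a (-(k:ℤ)) :=
          Finset.sum_congr rfl fun k _ => mul_comm _ _
  · have e1 : ∑ kl ∈ (Finset.Icc 1 N ×ˢ Finset.Icc 1 N).filter
          (fun kl : ℕ × ℕ => kl.1 + N - kl.2 = t), a (kl.1 : ℤ) * a (kl.2 : ℤ)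
        = ∑ k ∈ Finset.Icc 1 (N - (N - t)), a (k:ℤ) * a ((k:ℤ) + ((N-t : ℕ):ℤ)) := by
      refine (Finset.sum_nbij' (fun k => (k, k + (N-t))) (fun kl => kl.1) ?_ ?_ ?_ ?_ ?_).symm
      · intro k hk; simp only [Finset.mem_Icc] at hk
        simp only [Finset.mem_filter, Finset.mem_product, Finset.mem_Icc]
        show ((1 ≤ k ∧ k ≤ N) ∧ 1 ≤ k + (N - t) ∧ k + (N-t) ≤ N) ∧ k + N - (k + (N-t)) = t
        omega
      · intro kl hkl; simp only [Finset.mem_filter, Finset.mem_product, Finset.mem_Icc] at hkl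
        simp only [Finset.mem_Icc]; show 1 ≤ kl.1 ∧ kl.1 ≤ N - (N - t); omega
      · intro k hk; rfl
      · intro kl hkl; simp only [Finset.mem_filter, Finset.mem_product, Finset.mem_Icc] at hkl
        show (kl.1, kl.1 + (N - t)) = kl
        have : kl.2 = kl.1 + (N - t) := by omega
        ext <;> simp [this]
      · intro k hk; simp only [Finset.mem_Icc] at hk
        show a (k:ℤ) * a ((k:ℤ) + ((N-t : ℕ):ℤ)) = a (k:ℤ) * a ((k + (N-t) : ℕ):ℤ)
        rw [show ((k + (N-t) : ℕ):ℤ) = (k:ℤ) + ((N-t:ℕ):ℤ) by push_cast; ring]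
    have e2 : ∑ kl ∈ (Finset.Icc 1 N ×ˢ Finset.Icc 1 N).filter
          (fun kl : ℕ × ℕ => kl.1 + N - kl.2 = t), a (-(kl.1 : ℤ)) * a (-(kl.2 : ℤ))
        = ∑ k ∈ Finset.Icc 1 (N - (N - t)), a (-(k:ℤ)) * a (-((k:ℤ) + ((N-t : ℕ):ℤ))) := by
      refine (Finset.sum_nbij' (fun k => (k, k + (N-t))) (fun kl => kl.1) ?_ ?_ ?_ ?_ ?_).symm
      · intro k hk; simp only [Finset.mem_Icc] at hk
        simp only [Finset.mem_filter, Finset.mem_product, Finset.mem_Icc]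
        show ((1 ≤ k ∧ k ≤ N) ∧ 1 ≤ k + (N - t) ∧ k + (N-t) ≤ N) ∧ k + N - (k + (N-t)) = t
        omega
      · intro kl hkl; simp only [Finset.mem_filter, Finset.mem_product, Finset.mem_Icc] at hkl
        simp only [Finset.mem_Icc]; show 1 ≤ kl.1 ∧ kl.1 ≤ N - (N - t); omega
      · intro k hk; rfl
      · intro kl hkl; simp only [Finset.mem_filter, Finset.mem_product, Finset.mem_Icc] at hkl
        show (kl.1, kl.1 + (N - t)) = kl
        have : kl.2 = kl.1 + (N - t) := by omega
        ext <;> simp [this]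
      · intro k hk; simp only [Finset.mem_Icc] at hk
        show a (-(k:ℤ)) * a (-((k:ℤ) + ((N-t : ℕ):ℤ))) = a (-(k:ℤ)) * a (-((k + (N-t) : ℕ):ℤ))
        rw [show ((k + (N-t) : ℕ):ℤ) = (k:ℤ) + ((N-t:ℕ):ℤ) by push_cast; ring]
    rw [e1, e2]
    exact key (N - t) (by omega)

theorem real_normal_toeplitz_ppt_eq_qqt (N : ℕ) (hN : 1 ≤ N) (a : ℤ → ℝ)
    (p q pt qt : ℝ → ℝ)
    (hp : ∀ x : ℝ, p x = ∑ k ∈ Finset.Icc 1 N, a (k : ℤ) * x ^ k)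
    (hq : ∀ x : ℝ, q x = ∑ k ∈ Finset.Icc 1 N, a (-(k : ℤ)) * x ^ k)
    (hpt : ∀ x : ℝ, pt x = ∑ k ∈ Finset.Icc 1 N, a ((N : ℤ) + 1 - (k : ℤ)) * x ^ k)
    (hqt : ∀ x : ℝ, qt x = ∑ k ∈ Finset.Icc 1 N, a (-((N : ℤ) + 1 - (k : ℤ))) * x ^ k)
    (T : Matrix (Fin (N + 1)) (Fin (N + 1)) ℝ)
    (hT : ∀ j k : Fin (N + 1), T j k = a ((j : ℤ) - (k : ℤ)))
    (hnormal : T * Tᵀ = Tᵀ * T) :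
    ∀ x : ℝ, p x * pt x = q x * qt x := by
  have key : ∀ d : ℕ, d ≤ N →
      ∑ k ∈ Finset.Icc 1 (N - d), a (k : ℤ) * a ((k : ℤ) + (d : ℤ))
        = ∑ k ∈ Finset.Icc 1 (N - d), a (-(k : ℤ)) * a (-((k : ℤ) + (d : ℤ))) := by
    intro d hd
    have E : ∑ m ∈ Finset.range (N+1), a (-(m:ℤ)) * a ((d:ℤ) - (m:ℤ))
        = ∑ m ∈ Finset.range (N+1), a ((m:ℤ)) * a ((m:ℤ) - (d:ℤ)) := by
      have E0 := congrFun (congrFun hnormal ⟨0, Nat.succ_pos N⟩) ⟨d, by omega⟩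
      rw [Matrix.mul_apply, Matrix.mul_apply] at E0
      simp only [Matrix.transpose_apply, hT] at E0
      rw [Fin.sum_univ_eq_sum_range (fun m : ℕ => a (((0:ℕ):ℤ) - (m:ℤ)) * a ((d:ℤ) - (m:ℤ))),
          Fin.sum_univ_eq_sum_range (fun m : ℕ => a ((m:ℤ) - ((0:ℕ):ℤ)) * a ((m:ℤ) - (d:ℤ)))] at E0
      simpa using E0
    have split : ∀ f : ℕ → ℝ, ∑ m ∈ Finset.range (N+1), f m
        = ∑ m ∈ Finset.range (d+1), f m + ∑ k ∈ Finset.Icc 1 (N-d), f (k+d) := by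
      intro f
      rw [Finset.range_eq_Ico,
        ← Finset.sum_Ico_consecutive f (Nat.zero_le (d+1)) (by omega : d+1 ≤ N+1)]
      congr 1
      · rw [Finset.range_eq_Ico]
      refine Finset.sum_nbij' (fun m => m - d) (fun k => k + d) ?_ ?_ ?_ ?_ ?_
      · intro m hm; simp [Finset.mem_Ico] at hm; simp only [Finset.mem_Icc]
        show 1 ≤ m - d ∧ m - d ≤ N - d; omega
      · intro k hk; simp [Finset.mem_Icc] at hk; simp only [Finset.mem_Ico]
        show d + 1 ≤ k + d ∧ k + d < N + 1; omega
      · intro m hm; simp [Finset.mem_Ico] at hm; show m - d + d = m; omega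
      · intro k hk; simp [Finset.mem_Icc] at hk; show k + d - d = k; omega
      · intro m hm; simp [Finset.mem_Ico] at hm; show f m = f (m - d + d); congr 1; omega
    rw [split, split] at E
    have A2 : ∑ m ∈ Finset.range (d+1), a (-(m:ℤ)) * a ((d:ℤ) - (m:ℤ))
        = ∑ m ∈ Finset.range (d+1), a ((m:ℤ)) * a ((m:ℤ) - (d:ℤ)) := by
      refine Finset.sum_nbij' (fun m => d - m) (fun m => d - m) ?_ ?_ ?_ ?_ ?_
      · intro m hm; simp [Finset.mem_range] at hm ⊢
      · intro m hm; simp [Finset.mem_range] at hm ⊢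
      · intro m hm; simp [Finset.mem_range] at hm; show d - (d - m) = m; omega
      · intro m hm; simp [Finset.mem_range] at hm; show d - (d - m) = m; omega
      · intro m hm; simp [Finset.mem_range] at hm
        have h1 : ((d - m : ℕ) : ℤ) = (d:ℤ) - m := by omega
        rw [h1, show (d:ℤ) - m - d = -(m:ℤ) by ring, mul_comm]
    have hL : ∑ k ∈ Finset.Icc 1 (N-d), a (-((k+d : ℕ):ℤ)) * a ((d:ℤ) - ((k+d:ℕ):ℤ))
        = ∑ k ∈ Finset.Icc 1 (N - d), a (-(k : ℤ)) * a (-((k : ℤ) + (d : ℤ))) := by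
      refine Finset.sum_congr rfl fun k hk => ?_
      have h1 : -(((k+d:ℕ)) : ℤ) = -((k:ℤ)+(d:ℤ)) := by push_cast; ring
      have h2 : ((d:ℤ) - ((k+d:ℕ):ℤ)) = -(k:ℤ) := by push_cast; ring
      rw [h2, h1, mul_comm]
    have hR : ∑ k ∈ Finset.Icc 1 (N-d), a (((k+d : ℕ):ℤ)) * a (((k+d:ℕ):ℤ) - (d:ℤ))
        = ∑ k ∈ Finset.Icc 1 (N - d), a ((k : ℤ)) * a (((k : ℤ) + (d : ℤ))) := by
      refine Finset.sum_congr rfl fun k hk => ?_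
      have h1 : (((k+d:ℕ)) : ℤ) = ((k:ℤ)+(d:ℤ)) := by push_cast; ring
      have h2 : (((k+d:ℕ):ℤ) - (d:ℤ)) = (k:ℤ) := by push_cast; ring
      rw [h2, h1, mul_comm]
    rw [A2, hL, hR] at E
    linarith
  intro x
  have s1 := toeplitz_step1 N a x
  have s2 := toeplitz_step1 N (fun n => a (-n)) x
  rw [hp x, hpt x, hq x, hqt x, s1, s2, toeplitz_step2 N hN a x key]
end

section
/- Let N ≥ 1 and let a : ℤ → ℝ. Define p(x) = ∑_{k=1}^{N} a k * x^k, q(x) = ∑_{k=1}^{N} a (-k) * x^k, and q̃(x) = ∑_{k=1}^{N} a (-(N+1-k)) * x^k. If the (N+1)×(N+1) real Toeplitz matrix T with entries T j k = a (j - k) is normal (T * Tᵀ = Tᵀ * T), then for all real x: (p(x)^2 - q(x)^2) * (p(x)^2 - q̃(x)^2) = 0. -/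
open Matrix Finset

private lemma orth_aux (N : ℕ) (f g : ℕ → ℝ) (hf : ∀ k ∈ Icc 1 N, f (N+1-k) = f k)
    (hg : ∀ k ∈ Icc 1 N, g (N+1-k) = - g k) :
    ∑ k ∈ Icc 1 N, f k * g k = 0 := by
  have h : ∑ k ∈ Icc 1 N, f k * g k = ∑ k ∈ Icc 1 N, f (N+1-k) * g (N+1-k) := by
    apply Finset.sum_nbij' (i := fun k => N+1-k) (j := fun k => N+1-k) <;>
      intro k hk <;> simp only [mem_Icc] at * <;>
      first
      | omega
      | (rw [show N+1-(N+1-k) = k by omega])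
  have h2 : ∑ k ∈ Icc 1 N, f (N+1-k) * g (N+1-k) = -∑ k ∈ Icc 1 N, f k * g k := by
    rw [← Finset.sum_neg_distrib]
    exact Finset.sum_congr rfl fun k hk => by rw [hf k hk, hg k hk]; ring
  linarith

private lemma pair_extract_aux (N : ℕ) (s d t e : ℕ → ℝ)
    (hkey : ∀ j ∈ Icc 1 N, ∀ k ∈ Icc 1 N,
      s j * s k + d j * d k = t j * t k + e j * e k)
    (hsd : ∑ j ∈ Icc 1 N, s j * d j = 0)
    (hse : ∑ j ∈ Icc 1 N, s j * e j = 0) :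
    ∀ k ∈ Icc 1 N,
      (∑ j ∈ Icc 1 N, s j * s j) * s k = (∑ j ∈ Icc 1 N, s j * t j) * t k := by
  intro k hk
  have h : ∑ j ∈ Icc 1 N, s j * (s j * s k + d j * d k)
      = ∑ j ∈ Icc 1 N, s j * (t j * t k + e j * e k) :=
    Finset.sum_congr rfl fun j hj => by rw [hkey j hj k hk]
  have L : ∑ j ∈ Icc 1 N, s j * (s j * s k + d j * d k)
      = (∑ j ∈ Icc 1 N, s j * s j) * s k + (∑ j ∈ Icc 1 N, s j * d j) * d k := by
    rw [Finset.sum_mul, Finset.sum_mul, ← Finset.sum_add_distrib]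
    exact Finset.sum_congr rfl fun j _ => by ring
  have R : ∑ j ∈ Icc 1 N, s j * (t j * t k + e j * e k)
      = (∑ j ∈ Icc 1 N, s j * t j) * t k + (∑ j ∈ Icc 1 N, s j * e j) * e k := by
    rw [Finset.sum_mul, Finset.sum_mul, ← Finset.sum_add_distrib]
    exact Finset.sum_congr rfl fun j _ => by ring
  rw [L, hsd] at h
  rw [R, hse] at h
  simpa using h

private lemma signs_aux (N : ℕ) (s t : ℕ → ℝ)
    (h1 : ∀ k ∈ Icc 1 N,
      (∑ j ∈ Icc 1 N, s j * s j) * s k = (∑ j ∈ Icc 1 N, s j * t j) * t k)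
    (h2 : ∀ k ∈ Icc 1 N,
      (∑ j ∈ Icc 1 N, t j * t j) * t k = (∑ j ∈ Icc 1 N, t j * s j) * s k) :
    (∀ k ∈ Icc 1 N, t k = s k) ∨ (∀ k ∈ Icc 1 N, t k = - s k) := by
  set A := ∑ j ∈ Icc 1 N, s j * s j with hA
  set C := ∑ j ∈ Icc 1 N, t j * t j with hC
  set e := ∑ j ∈ Icc 1 N, s j * t j with he
  have hets : (∑ j ∈ Icc 1 N, t j * s j) = e := Finset.sum_congr rfl fun j _ => mul_comm _ _
  by_cases h0 : A = 0
  · have hs : ∀ j ∈ Icc 1 N, s j = 0 := fun j hj => mul_self_eq_zero.mp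
      ((Finset.sum_eq_zero_iff_of_nonneg (fun j _ => mul_self_nonneg (s j))).mp (hA ▸ h0) j hj)
    left
    intro k hk
    have h2k := h2 k hk
    rw [hets, he] at h2k
    have he0 : (∑ j ∈ Icc 1 N, s j * t j) = 0 :=
      Finset.sum_eq_zero fun j hj => by rw [hs j hj, zero_mul]
    rw [he0, zero_mul] at h2k
    have htk : t k = 0 := by
      by_cases hC0 : C = 0
      · exact mul_self_eq_zero.mp
          ((Finset.sum_eq_zero_iff_of_nonneg (fun j _ => mul_self_nonneg (t j))).mp (hC ▸ hC0) k hk)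
      · exact (mul_eq_zero.mp h2k).resolve_left hC0
    rw [htk, hs k hk]
  · have hAe : A * A = e * e := by
      have h : ∑ k ∈ Icc 1 N, (A * s k) * s k = ∑ k ∈ Icc 1 N, (e * t k) * s k :=
        Finset.sum_congr rfl fun k hk => by rw [h1 k hk]
      have L : ∑ k ∈ Icc 1 N, (A * s k) * s k = A * A := by
        calc ∑ k ∈ Icc 1 N, (A * s k) * s k = A * ∑ k ∈ Icc 1 N, s k * s k := by
              rw [Finset.mul_sum]; exact Finset.sum_congr rfl fun k _ => by ring
          _ = A * A := by rw [← hA]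
      have R : ∑ k ∈ Icc 1 N, (e * t k) * s k = e * e := by
        calc ∑ k ∈ Icc 1 N, (e * t k) * s k = e * ∑ k ∈ Icc 1 N, s k * t k := by
              rw [Finset.mul_sum]; exact Finset.sum_congr rfl fun k _ => by ring
          _ = e * e := by rw [← he]
      linarith
    have he0 : e ≠ 0 := fun h => h0 (mul_self_eq_zero.mp (by rw [hAe, h, mul_zero]))
    have hc : A / e = 1 ∨ A / e = -1 := by
      rcases mul_self_eq_one_iff.mp (show (A/e) * (A/e) = 1 by field_simp; linarith [hAe]) with h | h
      · exact Or.inl h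
      · exact Or.inr h
    have htk : ∀ k ∈ Icc 1 N, t k = (A / e) * s k := by
      intro k hk
      field_simp
      linarith [h1 k hk]
    rcases hc with h | h
    · left; intro k hk; rw [htk k hk, h, one_mul]
    · right; intro k hk; rw [htk k hk, h]; ring

private lemma four_cases_aux (N : ℕ) (u v : ℕ → ℝ)
    (hkey : ∀ j ∈ Icc 1 N, ∀ k ∈ Icc 1 N,
      u j * u k + u (N+1-j) * u (N+1-k) = v j * v k + v (N+1-j) * v (N+1-k)) :
    (∀ k ∈ Icc 1 N, v k = u k) ∨ (∀ k ∈ Icc 1 N, v k = - u k) ∨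
    (∀ k ∈ Icc 1 N, v k = u (N+1-k)) ∨ (∀ k ∈ Icc 1 N, v k = - u (N+1-k)) := by
  set s : ℕ → ℝ := fun k => u k + u (N+1-k) with hs
  set d : ℕ → ℝ := fun k => u k - u (N+1-k) with hd
  set s' : ℕ → ℝ := fun k => v k + v (N+1-k) with hs'
  set d' : ℕ → ℝ := fun k => v k - v (N+1-k) with hd'
  have hrev : ∀ k ∈ Icc 1 N, N+1-(N+1-k) = k := by
    intro k hk; simp only [mem_Icc] at hk; omega
  have hspal : ∀ k ∈ Icc 1 N, s (N+1-k) = s k := by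
    intro k hk; simp only [hs]; rw [hrev k hk]; ring
  have hs'pal : ∀ k ∈ Icc 1 N, s' (N+1-k) = s' k := by
    intro k hk; simp only [hs']; rw [hrev k hk]; ring
  have hdanti : ∀ k ∈ Icc 1 N, d (N+1-k) = - d k := by
    intro k hk; simp only [hd]; rw [hrev k hk]; ring
  have hd'anti : ∀ k ∈ Icc 1 N, d' (N+1-k) = - d' k := by
    intro k hk; simp only [hd']; rw [hrev k hk]; ring
  have key' : ∀ j ∈ Icc 1 N, ∀ k ∈ Icc 1 N,
      s j * s k + d j * d k = s' j * s' k + d' j * d' k := by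
    intro j hj k hk
    simp only [hs, hd, hs', hd']
    linear_combination 2 * hkey j hj k hk
  have key'' : ∀ j ∈ Icc 1 N, ∀ k ∈ Icc 1 N,
      s' j * s' k + d' j * d' k = s j * s k + d j * d k :=
    fun j hj k hk => (key' j hj k hk).symm
  have keyd : ∀ j ∈ Icc 1 N, ∀ k ∈ Icc 1 N,
      d j * d k + s j * s k = d' j * d' k + s' j * s' k := by
    intro j hj k hk; linarith [key' j hj k hk]
  have keyd' : ∀ j ∈ Icc 1 N, ∀ k ∈ Icc 1 N,
      d' j * d' k + s' j * s' k = d j * d k + s j * s k :=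
    fun j hj k hk => (keyd j hj k hk).symm
  have hsd : ∑ j ∈ Icc 1 N, s j * d j = 0 := orth_aux N s d hspal hdanti
  have hsd' : ∑ j ∈ Icc 1 N, s j * d' j = 0 := orth_aux N s d' hspal hd'anti
  have hs'd : ∑ j ∈ Icc 1 N, s' j * d j = 0 := orth_aux N s' d hs'pal hdanti
  have hs'd' : ∑ j ∈ Icc 1 N, s' j * d' j = 0 := orth_aux N s' d' hs'pal hd'anti
  have hds : ∑ j ∈ Icc 1 N, d j * s j = 0 := by
    rw [show ∑ j ∈ Icc 1 N, d j * s j = ∑ j ∈ Icc 1 N, s j * d j from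
      Finset.sum_congr rfl fun j _ => mul_comm _ _]; exact hsd
  have hds' : ∑ j ∈ Icc 1 N, d j * s' j = 0 := by
    rw [show ∑ j ∈ Icc 1 N, d j * s' j = ∑ j ∈ Icc 1 N, s' j * d j from
      Finset.sum_congr rfl fun j _ => mul_comm _ _]; exact hs'd
  have hd's : ∑ j ∈ Icc 1 N, d' j * s j = 0 := by
    rw [show ∑ j ∈ Icc 1 N, d' j * s j = ∑ j ∈ Icc 1 N, s j * d' j from
      Finset.sum_congr rfl fun j _ => mul_comm _ _]; exact hsd'
  have hd's' : ∑ j ∈ Icc 1 N, d' j * s' j = 0 := by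
    rw [show ∑ j ∈ Icc 1 N, d' j * s' j = ∑ j ∈ Icc 1 N, s' j * d' j from
      Finset.sum_congr rfl fun j _ => mul_comm _ _]; exact hs'd'
  have hS := signs_aux N s s'
    (pair_extract_aux N s d s' d' key' hsd hsd')
    (pair_extract_aux N s' d' s d key'' hs'd' hs'd)
  have hD := signs_aux N d d'
    (pair_extract_aux N d s d' s' keyd hds hds')
    (pair_extract_aux N d' s' d s keyd' hd's' hd's)
  have hvk : ∀ k ∈ Icc 1 N, s' k = v k + v (N+1-k) ∧ d' k = v k - v (N+1-k)
      ∧ s k = u k + u (N+1-k) ∧ d k = u k - u (N+1-k) := by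
    intro k hk; exact ⟨rfl, rfl, rfl, rfl⟩
  rcases hS with h₁ | h₁ <;> rcases hD with h₂ | h₂
  · left
    intro k hk
    obtain ⟨e1, e2, e3, e4⟩ := hvk k hk
    have := h₁ k hk; have := h₂ k hk
    rw [e1, e3] at ‹s' k = s k›; rw [e2, e4] at ‹d' k = d k›
    linarith
  · right; right; left
    intro k hk
    obtain ⟨e1, e2, e3, e4⟩ := hvk k hk
    have := h₁ k hk; have := h₂ k hk
    rw [e1, e3] at ‹s' k = s k›; rw [e2, e4] at ‹d' k = - d k›
    linarith
  · right; right; right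
    intro k hk
    obtain ⟨e1, e2, e3, e4⟩ := hvk k hk
    have := h₁ k hk; have := h₂ k hk
    rw [e1, e3] at ‹s' k = - s k›; rw [e2, e4] at ‹d' k = d k›
    linarith
  · right; left
    intro k hk
    obtain ⟨e1, e2, e3, e4⟩ := hvk k hk
    have := h₁ k hk; have := h₂ k hk
    rw [e1, e3] at ‹s' k = - s k›; rw [e2, e4] at ‹d' k = - d k›
    linarith

theorem real_normal_toeplitz_factorization (N : ℕ) (hN : 1 ≤ N) (a : ℤ → ℝ)
    (p q qt : ℝ → ℝ)
    (hp : ∀ x : ℝ, p x = ∑ k ∈ Finset.Icc 1 N, a (k : ℤ) * x ^ k)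
    (hq : ∀ x : ℝ, q x = ∑ k ∈ Finset.Icc 1 N, a (-(k : ℤ)) * x ^ k)
    (hqt : ∀ x : ℝ, qt x = ∑ k ∈ Finset.Icc 1 N, a (-((N : ℤ) + 1 - (k : ℤ))) * x ^ k)
    (T : Matrix (Fin (N + 1)) (Fin (N + 1)) ℝ)
    (hT : ∀ j k : Fin (N + 1), T j k = a ((j : ℤ) - (k : ℤ)))
    (hnormal : T * Tᵀ = Tᵀ * T) :
    ∀ x : ℝ, (p x ^ 2 - q x ^ 2) * (p x ^ 2 - qt x ^ 2) = 0 := by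
  -- entrywise equality
  have hEnt : ∀ pp qq : Fin (N+1),
      ∑ m : Fin (N+1), a ((pp:ℤ) - (m:ℤ)) * a ((qq:ℤ) - (m:ℤ))
        = ∑ m : Fin (N+1), a ((m:ℤ) - (pp:ℤ)) * a ((m:ℤ) - (qq:ℤ)) := by
    intro pp qq
    have h := congrFun (congrFun hnormal pp) qq
    simpa [Matrix.mul_apply, Matrix.transpose_apply, hT] using h
  have hEnt2 : ∀ j k : ℕ, j ≤ N → k ≤ N →
      ∑ m ∈ range (N+1), a ((j:ℤ) - (m:ℤ)) * a ((k:ℤ) - (m:ℤ))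
        = ∑ m ∈ range (N+1), a ((m:ℤ) - (j:ℤ)) * a ((m:ℤ) - (k:ℤ)) := by
    intro j k hj hk
    have h := hEnt ⟨j, by omega⟩ ⟨k, by omega⟩
    rw [← Fin.sum_univ_eq_sum_range (fun m => a ((j:ℤ) - (m:ℤ)) * a ((k:ℤ) - (m:ℤ))) (N+1),
        ← Fin.sum_univ_eq_sum_range (fun m => a ((m:ℤ) - (j:ℤ)) * a ((m:ℤ) - (k:ℤ))) (N+1)]
    simpa using h
  -- telescoping identities
  have tel1 : ∀ J K : ℤ,
      (∑ m ∈ range (N+1), a (J - (m:ℤ)) * a (K - (m:ℤ)))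
        - ∑ m ∈ range (N+1), a (J - 1 - (m:ℤ)) * a (K - 1 - (m:ℤ))
      = a J * a K - a (J - ((N:ℤ)+1)) * a (K - ((N:ℤ)+1)) := by
    intro J K
    have e1 : ∑ m ∈ range (N+1), a (J - 1 - (m:ℤ)) * a (K - 1 - (m:ℤ))
        = ∑ m ∈ range (N+1), a (J - ((m:ℤ)+1)) * a (K - ((m:ℤ)+1)) :=
      Finset.sum_congr rfl fun m _ => by
        rw [show J - 1 - (m:ℤ) = J - ((m:ℤ)+1) by ring,
            show K - 1 - (m:ℤ) = K - ((m:ℤ)+1) by ring]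
    rw [e1, Finset.sum_range_succ (fun m => a (J - ((m:ℤ)+1)) * a (K - ((m:ℤ)+1))) N,
        Finset.sum_range_succ' (fun m => a (J - (m:ℤ)) * a (K - (m:ℤ))) N]
    push_cast
    simp only [sub_zero]
    linarith
  have tel2 : ∀ J K : ℤ,
      (∑ m ∈ range (N+1), a ((m:ℤ) - J) * a ((m:ℤ) - K))
        - ∑ m ∈ range (N+1), a ((m:ℤ) - (J-1)) * a ((m:ℤ) - (K-1))
      = a (-J) * a (-K) - a (((N:ℤ)+1) - J) * a (((N:ℤ)+1) - K) := by
    intro J K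
    have e1 : ∑ m ∈ range (N+1), a ((m:ℤ) - (J-1)) * a ((m:ℤ) - (K-1))
        = ∑ m ∈ range (N+1), a (((m:ℤ)+1) - J) * a (((m:ℤ)+1) - K) :=
      Finset.sum_congr rfl fun m _ => by
        rw [show (m:ℤ) - (J-1) = ((m:ℤ)+1) - J by ring,
            show (m:ℤ) - (K-1) = ((m:ℤ)+1) - K by ring]
    rw [e1, Finset.sum_range_succ' (fun m => a ((m:ℤ) - J) * a ((m:ℤ) - K)) N]
    have e2 : ∑ m ∈ range N, a ((↑(m+1):ℤ) - J) * a ((↑(m+1):ℤ) - K)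
        = ∑ m ∈ range N, a (((m:ℤ)+1) - J) * a (((m:ℤ)+1) - K) :=
      Finset.sum_congr rfl fun m _ => by push_cast; ring_nf
    rw [e2, Finset.sum_range_succ (fun m => a (((m:ℤ)+1) - J) * a (((m:ℤ)+1) - K)) N]
    push_cast
    simp only [zero_sub]
    linarith
  -- the key identity
  have key0 : ∀ j ∈ Icc 1 N, ∀ k ∈ Icc 1 N,
      a (j:ℤ) * a (k:ℤ) + a (((N+1-j : ℕ)):ℤ) * a (((N+1-k : ℕ)):ℤ)
        = a (-(j:ℤ)) * a (-(k:ℤ)) + a (-((N+1-j : ℕ):ℤ)) * a (-((N+1-k : ℕ):ℤ)) := by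
    intro j hj k hk
    simp only [mem_Icc] at hj hk
    have h1 := hEnt2 j k (by omega) (by omega)
    have h2 := hEnt2 (j-1) (k-1) (by omega) (by omega)
    rw [show ((j-1 : ℕ):ℤ) = (j:ℤ) - 1 by omega, show ((k-1 : ℕ):ℤ) = (k:ℤ) - 1 by omega] at h2
    have t1 := tel1 (j:ℤ) (k:ℤ)
    have t2 := tel2 (j:ℤ) (k:ℤ)
    rw [show ((N+1-j : ℕ):ℤ) = (N:ℤ)+1-(j:ℤ) by omega, show ((N+1-k : ℕ):ℤ) = (N:ℤ)+1-(k:ℤ) by omega,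
        show (-((N:ℤ)+1-(j:ℤ))) = (j:ℤ) - ((N:ℤ)+1) by ring,
        show (-((N:ℤ)+1-(k:ℤ))) = (k:ℤ) - ((N:ℤ)+1) by ring]
    linarith
  have hfour := four_cases_aux N (fun k => a (k:ℤ)) (fun k => a (-(k:ℤ))) key0
  intro x
  have harg : ∀ k ∈ Icc 1 N, -((N:ℤ) + 1 - (k:ℤ)) = -((N+1-k : ℕ):ℤ) := by
    intro k hk; simp only [mem_Icc] at hk; omega
  rcases hfour with h | h | h | h
  · have hqp : q x = p x := by
      rw [hq x, hp x]
      exact Finset.sum_congr rfl fun k hk => by rw [h k hk]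
    rw [hqp]; ring
  · have hqp : q x = - p x := by
      rw [hq x, hp x, ← Finset.sum_neg_distrib]
      exact Finset.sum_congr rfl fun k hk => by rw [h k hk]; ring
    rw [hqp]; ring
  · have hqp : qt x = p x := by
      rw [hqt x, hp x]
      refine Finset.sum_congr rfl fun k hk => ?_
      have hk' : N+1-k ∈ Icc 1 N := by simp only [mem_Icc] at *; omega
      have := h (N+1-k) hk'
      rw [show N+1-(N+1-k) = k from by simp only [mem_Icc] at hk; omega] at this
      rw [harg k hk, this]
    rw [hqp]; ring
  · have hqp : qt x = - p x := by
      rw [hqt x, hp x, ← Finset.sum_neg_distrib]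
      refine Finset.sum_congr rfl fun k hk => ?_
      have hk' : N+1-k ∈ Icc 1 N := by simp only [mem_Icc] at *; omega
      have := h (N+1-k) hk'
      rw [show N+1-(N+1-k) = k from by simp only [mem_Icc] at hk; omega] at this
      rw [harg k hk, this]; ring
    rw [hqp]; ring
end

section
/- Let N ≥ 1 and let a : ℤ → ℝ. Suppose one of the following four conditions holds: (i) a(-k) = a k for all 1 ≤ k ≤ N; (ii) a(-k) = -a k for all 1 ≤ k ≤ N; (iii) a(-k) = a(N + 1 - k) for all 1 ≤ k ≤ N; (iv) a(-k) = -a(N + 1 - k) for all 1 ≤ k ≤ N. Then the (N+1)×(N+1) real Toeplitz matrix T with entries T j k = a (j - k) is normal: T * Tᵀ = Tᵀ * T. -/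
open Matrix

lemma coe_helper (n : ℕ) (j k m : Fin (n+1)) :
    ∃ q : ℤ, ((j + k - m : Fin (n+1)) : ℤ) = (j:ℤ) + (k:ℤ) - (m:ℤ) + q * (n+1) := by
  have hm : m.val < n+1 := m.isLt
  have h1 : ((j + k : Fin (n+1))).val = (j.val + k.val) % (n+1) := Fin.val_add j k
  have h2 : (j + k - m).val = ((n+1) - m.val + (j+k).val) % (n+1) := by rw [Fin.sub_def]
  have h1z : (((j+k : Fin (n+1)) : ℕ) : ℤ) = ((j:ℤ) + (k:ℤ)) % ((n:ℤ)+1) := by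
    rw [h1]; push_cast; ring_nf
  have h2z : (((j + k - m : Fin (n+1)) : ℕ) : ℤ)
      = (((n:ℤ)+1) - (m:ℤ) + ((j+k : Fin (n+1)) : ℤ)) % ((n:ℤ)+1) := by
    rw [h2]; push_cast [Nat.cast_sub (le_of_lt hm)]; ring_nf
  set M : ℤ := (n:ℤ)+1 with hM
  set X1 : ℤ := (j:ℤ) + (k:ℤ) with hX1
  set X2 : ℤ := M - (m:ℤ) + ((j+k : Fin (n+1)) : ℤ) with hX2
  refine ⟨1 - X1 / M - X2 / M, ?_⟩
  have e1 : X1 % M = X1 - M * (X1 / M) := Int.emod_def X1 M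
  have e2 : X2 % M = X2 - M * (X2 / M) := Int.emod_def X2 M
  rw [h2z, e2, hX2, h1z, e1]
  ring

/-- "circulant-type" normality -/
lemma lemB (N : ℕ) (s : ℤ → ℝ) (T : Matrix (Fin (N+1)) (Fin (N+1)) ℝ)
    (hT : ∀ j k : Fin (N+1), T j k = s ((j:ℤ) - (k:ℤ)))
    (hs : ∀ x y : ℤ, s (x + ((N:ℤ)+1)) * s (y + ((N:ℤ)+1)) = s x * s y) :
    T * Tᵀ = Tᵀ * T := by
  set M : ℤ := (N:ℤ)+1 with hM
  have hq : ∀ q x y : ℤ, s (x + q * M) * s (y + q * M) = s x * s y := by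
    intro q
    induction q using Int.induction_on with
    | zero => simp
    | succ i ih =>
                 intro x y
                 have := hs (x + i * M) (y + i * M)
                 rw [show x + (i+1:ℤ) * M = x + i * M + M by ring,
                     show y + (i+1:ℤ) * M = y + i * M + M by ring, this]
                 exact ih x y
    | pred i ih =>
                 intro x y
                 have h2 := hs (x + (-(i:ℤ)-1) * M) (y + (-(i:ℤ)-1) * M)
                 rw [show x + (-(i:ℤ)-1) * M + M = x + (-(i:ℤ)) * M by ring,
                     show y + (-(i:ℤ)-1) * M + M = y + (-(i:ℤ)) * M by ring] at h2
                 rw [← ih x y, ← h2]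
  ext j k
  simp only [mul_apply, transpose_apply, hT]
  rw [← Equiv.sum_comp (Equiv.subLeft (j + k))
        (fun m : Fin (N+1) => s ((m:ℤ) - (j:ℤ)) * s ((m:ℤ) - (k:ℤ)))]
  refine Finset.sum_congr rfl fun m _ => ?_
  obtain ⟨q, hqc⟩ := coe_helper N j k m
  simp only [Equiv.subLeft_apply]
  rw [show ((j + k - m : Fin (N+1)) : ℤ) - (j:ℤ) = ((k:ℤ) - m) + q * M by rw [hqc]; ring,
      show ((j + k - m : Fin (N+1)) : ℤ) - (k:ℤ) = ((j:ℤ) - m) + q * M by rw [hqc]; ring,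
      hq q]
  ring

/-- "shifted skew-symmetric" normality -/
lemma lemA {n : ℕ} (S : Matrix (Fin n) (Fin n) ℝ) (c : ℝ) (hSk : Sᵀ = -S) :
    (S + c • 1) * (S + c • 1)ᵀ = (S + c • 1)ᵀ * (S + c • 1) := by
  rw [transpose_add, transpose_smul, transpose_one, hSk]
  simp only [add_mul, mul_add, mul_neg, neg_mul, smul_mul_assoc, mul_smul_comm,
    one_mul, mul_one, smul_add, smul_neg, smul_smul]
  abel

theorem four_types_implies_normal (N : ℕ) (hN : 1 ≤ N) (a : ℤ → ℝ)
    (T : Matrix (Fin (N + 1)) (Fin (N + 1)) ℝ)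
    (hT : ∀ j k : Fin (N + 1), T j k = a ((j : ℤ) - (k : ℤ)))
    (h : (∀ k : ℤ, 1 ≤ k → k ≤ N → a (-k) = a k) ∨
         (∀ k : ℤ, 1 ≤ k → k ≤ N → a (-k) = -a k) ∨
         (∀ k : ℤ, 1 ≤ k → k ≤ N → a (-k) = a ((N : ℤ) + 1 - k)) ∨
         (∀ k : ℤ, 1 ≤ k → k ≤ N → a (-k) = -a ((N : ℤ) + 1 - k))) :
    T * Tᵀ = Tᵀ * T := by
  have hbnd : ∀ j k : Fin (N+1), -(N:ℤ) ≤ (j:ℤ) - (k:ℤ) ∧ (j:ℤ) - (k:ℤ) ≤ N := by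
    intro j k
    have hj := j.isLt
    have hk := k.isLt
    omega
  rcases h with h | h | h | h
  · -- symmetric case
    have hsymm : Tᵀ = T := by
      ext j k
      rw [transpose_apply, hT, hT]
      obtain ⟨hb1, hb2⟩ := hbnd j k
      rcases lt_trichotomy ((j:ℤ) - k) 0 with hlt | heq | hgt
      · have hh := h ((k:ℤ) - j) (by omega) (by omega)
        rw [show (j:ℤ)-k = -((k:ℤ)-j) by ring, hh]
      · rw [heq, show (k:ℤ)-j = 0 by omega]
      · have hh := h ((j:ℤ) - k) (by omega) (by omega)
        rw [show (k:ℤ)-j = -((j:ℤ)-k) by ring, hh]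
    rw [hsymm]
  · -- skew case
    have hSk : (T - a 0 • 1)ᵀ = -(T - a 0 • 1) := by
      ext j k
      simp only [transpose_apply, Matrix.sub_apply, Matrix.smul_apply, one_apply, Matrix.neg_apply,
        hT, smul_eq_mul]
      by_cases hjk : j = k
      · subst hjk; simp
      · have hjk' : ¬ (k = j) := fun hh => hjk hh.symm
        simp only [hjk, hjk', if_false, mul_zero, sub_zero]
        obtain ⟨hb1, hb2⟩ := hbnd j k
        have hne : (j:ℤ) - k ≠ 0 := by
          intro hh
          apply hjk
          have : (j:ℤ) = k := by omega
          exact Fin.ext (by exact_mod_cast this)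
        rcases lt_trichotomy ((j:ℤ) - k) 0 with hlt | heq | hgt
        · have hh := h ((k:ℤ) - j) (by omega) (by omega)
          rw [show (j:ℤ)-k = -((k:ℤ)-j) by ring, hh]
          ring
        · exact absurd heq hne
        · have hh := h ((j:ℤ) - k) (by omega) (by omega)
          rw [show (k:ℤ)-j = -((j:ℤ)-k) by ring, hh]
    have hTS : T = (T - a 0 • 1) + a 0 • 1 := by abel
    rw [hTS]
    exact lemA _ _ hSk
  · -- circulant case
    set M : ℤ := (N:ℤ)+1 with hM
    set s : ℤ → ℝ := fun t => a (t % M) with hs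
    have hmodneg : ∀ t : ℤ, -(N:ℤ) ≤ t → t < 0 → t % M = t + M := by
      intro t h1 h2
      have h3 : (t + M) % M = t + M := Int.emod_eq_of_lt (by omega) (by omega)
      calc t % M = (t + 1 * M) % M := (Int.add_mul_emod_self_right _ _ _).symm
        _ = t + M := by rw [one_mul, h3]
    have hTs : ∀ j k : Fin (N+1), T j k = s ((j:ℤ) - k) := by
      intro j k
      rw [hT]
      obtain ⟨hb1, hb2⟩ := hbnd j k
      set t : ℤ := (j:ℤ) - k with ht
      rcases le_or_gt 0 t with hge | hlt
      · rw [hs]; simp only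
        rw [Int.emod_eq_of_lt hge (by omega)]
      · rw [hs]; simp only
        rw [hmodneg t hb1 hlt]
        have hh := h (-t) (by omega) (by omega)
        rw [show -(-t) = t by ring] at hh
        rw [hh]
        congr 1; omega
    refine lemB N s T hTs ?_
    intro x y
    rw [hs]; simp only
    rw [show x + ((N:ℤ)+1) = x + 1 * M by rw [hM]; ring, Int.add_mul_emod_self_right,
        show y + ((N:ℤ)+1) = y + 1 * M by rw [hM]; ring, Int.add_mul_emod_self_right]
  · -- skew-circulant case
    set M : ℤ := (N:ℤ)+1 with hM
    set sg : ℤ → ℝ := fun q => if Even q then (1:ℝ) else -1 with hsg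
    have hsgstep : ∀ q : ℤ, sg (q + 1) = - sg q := by
      intro q
      rw [hsg]; simp only [Int.even_add_one]
      by_cases hq : Even q <;> simp [hq]
    set s : ℤ → ℝ := fun t => sg (t / M) * a (t % M) with hs
    have hMne : M ≠ 0 := by omega
    have hstep : ∀ t : ℤ, s (t + M) = - s t := by
      intro t
      rw [hs]; simp only
      rw [show t + M = t + 1 * M by ring, Int.add_mul_emod_self_right,
          Int.add_mul_ediv_right t 1 hMne, hsgstep]
      ring
    have hTs : ∀ j k : Fin (N+1), T j k = s ((j:ℤ) - k) := by
      intro j k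
      rw [hT]
      obtain ⟨hb1, hb2⟩ := hbnd j k
      set t : ℤ := (j:ℤ) - k with ht
      rcases le_or_gt 0 t with hge | hlt
      · rw [hs]; simp only
        rw [Int.emod_eq_of_lt hge (by omega), Int.ediv_eq_zero_of_lt hge (by omega)]
        rw [hsg]; simp
      · have hdiv : t / M = -1 := by
          have h0 : (t + M) / M = 0 := Int.ediv_eq_zero_of_lt (by omega) (by omega)
          rw [show t + M = t + 1 * M by ring, Int.add_mul_ediv_right t 1 hMne] at h0
          omega
        have hmod : t % M = t + M := by
          have h3 : (t + M) % M = t + M := Int.emod_eq_of_lt (by omega) (by omega)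
          calc t % M = (t + 1 * M) % M := (Int.add_mul_emod_self_right _ _ _).symm
            _ = t + M := by rw [one_mul, h3]
        rw [hs]; simp only
        rw [hdiv, hmod]
        have hodd : ¬ Even (-1 : ℤ) := by decide
        rw [hsg]; simp only [hodd, if_false]
        have hh := h (-t) (by omega) (by omega)
        rw [show -(-t) = t by ring] at hh
        rw [hh]
        rw [show (N:ℤ) + 1 - -t = t + M by omega]
        ring
    refine lemB N s T hTs ?_
    intro x y
    rw [show ((N:ℤ)+1) = M by rw [hM], hstep, hstep]
    ring
end

section
/- Let N ≥ 1 and let a : ℤ → ℂ. Define s(x) = ∑_{k=1}^{N} a k * exp(i k x) and t(x) = ∑_{k=1}^{N} a (-k) * exp(-i k x). If the (N+1)×(N+1) Toeplitz matrix T with entries T j k = a (j - k) is normal (T * Tᴴ = Tᴴ * T), then for all real x and y: s(x) * conj(s(y)) - conj(t(x)) * t(y) + conj(s(x)) * s(y) * exp(i (N+1) (x - y)) - t(x) * conj(t(y)) * exp(i (N+1) (x - y)) = 0. -/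
open Matrix

private lemma ntti_tele (g : ℤ → ℂ) (N : ℕ) (c : ℤ) :
    ∑ m ∈ Finset.range (N+1), g (c + 1 - (m:ℤ)) =
      g (c+1) - g (c - N) + ∑ m ∈ Finset.range (N+1), g (c - (m:ℤ)) := by
  rw [Finset.sum_range_succ' (fun m => g (c + 1 - (m:ℤ))) N,
      Finset.sum_range_succ (fun m => g (c - (m:ℤ))) N]
  have h : ∀ m : ℕ, g (c + 1 - ((m:ℤ)+1)) = g (c - (m:ℤ)) := by
    intro m; congr 1; ring
  push_cast
  simp only [h]
  ring

private lemma ntti_key (N : ℕ) (a : ℤ → ℂ)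
    (T : Matrix (Fin (N + 1)) (Fin (N + 1)) ℂ)
    (hT : ∀ j k : Fin (N + 1), T j k = a ((j : ℤ) - (k : ℤ)))
    (hnormal : T * Tᴴ = Tᴴ * T) (j k : ℕ) (hj : j < N) (hk : k < N) :
    a ((j:ℤ)+1) * (starRingEnd ℂ) (a ((k:ℤ)+1)) - a ((j:ℤ) - N) * (starRingEnd ℂ) (a ((k:ℤ) - N))
      = (starRingEnd ℂ) (a (-((j:ℤ)+1))) * a (-((k:ℤ)+1))
        - (starRingEnd ℂ) (a ((N:ℤ) - j)) * a ((N:ℤ) - k) := by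
  have entry : ∀ p q : Fin (N+1),
      ∑ m ∈ Finset.range (N+1), a ((p:ℤ) - m) * (starRingEnd ℂ) (a ((q:ℤ) - m))
        = ∑ m ∈ Finset.range (N+1), (starRingEnd ℂ) (a ((m:ℤ) - p)) * a ((m:ℤ) - q) := by
    intro p q
    have := congrFun (congrFun hnormal p) q
    simp only [Matrix.mul_apply, Matrix.conjTranspose_apply, hT] at this
    rw [← Fin.sum_univ_eq_sum_range (fun m => a ((p:ℤ) - m) * (starRingEnd ℂ) (a ((q:ℤ) - m))) (N+1),
        ← Fin.sum_univ_eq_sum_range (fun m => (starRingEnd ℂ) (a ((m:ℤ) - p)) * a ((m:ℤ) - q)) (N+1)]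
    convert this using 2 <;> simp [RCLike.star_def]
  have hA := entry ⟨j, by omega⟩ ⟨k, by omega⟩
  have hB := entry ⟨j+1, by omega⟩ ⟨k+1, by omega⟩
  simp only [Fin.val_mk] at hA hB
  set g : ℤ → ℂ := fun u => a u * (starRingEnd ℂ) (a (u + k - j)) with hg
  set h : ℤ → ℂ := fun u => (starRingEnd ℂ) (a (-u)) * a ((j:ℤ) - k - u) with hh
  have eg1 : ∀ m : ℕ, g ((j:ℤ) - m) = a ((j:ℤ) - m) * (starRingEnd ℂ) (a ((k:ℤ) - m)) := by
    intro m; simp only [hg]; congr 2 <;> push_cast <;> ring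
  have eg2 : ∀ m : ℕ, g ((j:ℤ) + 1 - m) = a (((j:ℤ)+1) - m) * (starRingEnd ℂ) (a (((k:ℤ)+1) - m)) := by
    intro m; simp only [hg]; congr 2 <;> push_cast <;> ring
  have eh1 : ∀ m : ℕ, h ((j:ℤ) - m) = (starRingEnd ℂ) (a ((m:ℤ) - j)) * a ((m:ℤ) - k) := by
    intro m; simp only [hh]; congr 2 <;> push_cast <;> ring
  have eh2 : ∀ m : ℕ, h ((j:ℤ) + 1 - m) = (starRingEnd ℂ) (a ((m:ℤ) - ((j:ℤ)+1))) * a ((m:ℤ) - ((k:ℤ)+1)) := by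
    intro m; simp only [hh]; congr 2 <;> push_cast <;> ring
  have tg := ntti_tele g N j
  have th := ntti_tele h N j
  simp only [eg1, eg2, eh1, eh2] at tg th
  have hB' : ∑ m ∈ Finset.range (N+1), a (((j:ℤ)+1) - m) * (starRingEnd ℂ) (a (((k:ℤ)+1) - m))
      = ∑ m ∈ Finset.range (N+1), (starRingEnd ℂ) (a ((m:ℤ) - ((j:ℤ)+1))) * a ((m:ℤ) - ((k:ℤ)+1)) := by
    convert hB using 2 <;> push_cast <;> ring_nf
  have e1 : g ((j:ℤ)+1) = a ((j:ℤ)+1) * (starRingEnd ℂ) (a ((k:ℤ)+1)) := by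
    simp only [hg]; congr 2 <;> push_cast <;> ring
  have e3 : h ((j:ℤ)+1) = (starRingEnd ℂ) (a (-((j:ℤ)+1))) * a (-((k:ℤ)+1)) := by
    simp only [hh]; congr 2 <;> push_cast <;> ring
  rw [e1] at tg
  rw [e3] at th
  linear_combination -tg + th + hB' - hA

private lemma ntti_cor (N : ℕ) (a : ℤ → ℂ)
    (T : Matrix (Fin (N + 1)) (Fin (N + 1)) ℂ)
    (hT : ∀ j k : Fin (N + 1), T j k = a ((j : ℤ) - (k : ℤ)))
    (hnormal : T * Tᴴ = Tᴴ * T) (j k : ℕ)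
    (hj1 : 1 ≤ j) (hj2 : j ≤ N) (hk1 : 1 ≤ k) (hk2 : k ≤ N) :
    a (j:ℤ) * (starRingEnd ℂ) (a (k:ℤ)) - a ((j:ℤ) - 1 - N) * (starRingEnd ℂ) (a ((k:ℤ) - 1 - N))
      = (starRingEnd ℂ) (a (-(j:ℤ))) * a (-(k:ℤ))
        - (starRingEnd ℂ) (a ((N:ℤ) + 1 - j)) * a ((N:ℤ) + 1 - k) := by
  have H := ntti_key N a T hT hnormal (j-1) (k-1) (by omega) (by omega)
  have e1 : ((j-1:ℕ):ℤ) + 1 = (j:ℤ) := by omega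
  have f1 : ((k-1:ℕ):ℤ) + 1 = (k:ℤ) := by omega
  rw [e1, f1] at H
  have e2 : ((j-1:ℕ):ℤ) - (N:ℤ) = (j:ℤ) - 1 - N := by omega
  have f2 : ((k-1:ℕ):ℤ) - (N:ℤ) = (k:ℤ) - 1 - N := by omega
  have e4 : (N:ℤ) - ((j-1:ℕ):ℤ) = (N:ℤ) + 1 - j := by omega
  have f4 : (N:ℤ) - ((k-1:ℕ):ℤ) = (N:ℤ) + 1 - k := by omega
  rw [e2, f2, e4, f4] at H
  exact H

private lemma ntti_reidx (N : ℕ) (F : ℕ → ℂ) :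
    ∑ j ∈ Finset.Icc 1 N, F (N + 1 - j) = ∑ j ∈ Finset.Icc 1 N, F j := by
  apply Finset.sum_nbij' (i := fun j => N + 1 - j) (j := fun j => N + 1 - j) <;>
    simp only [Finset.mem_Icc] <;> intro a ha
  case hi => omega
  case hj => omega
  case left_neg => omega
  case right_neg => omega
  case h => trivial

theorem normal_toeplitz_trig_identity (N : ℕ) (hN : 1 ≤ N) (a : ℤ → ℂ)
    (s t : ℝ → ℂ)
    (hs : ∀ x : ℝ, s x = ∑ k ∈ Finset.Icc 1 N, a (k : ℤ) * Complex.exp (Complex.I * (k : ℂ) * (x : ℂ)))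
    (ht : ∀ x : ℝ, t x = ∑ k ∈ Finset.Icc 1 N, a (-(k : ℤ)) * Complex.exp (-(Complex.I * (k : ℂ) * (x : ℂ))))
    (T : Matrix (Fin (N + 1)) (Fin (N + 1)) ℂ)
    (hT : ∀ j k : Fin (N + 1), T j k = a ((j : ℤ) - (k : ℤ)))
    (hnormal : T * Tᴴ = Tᴴ * T) :
    ∀ x y : ℝ,
      s x * (starRingEnd ℂ) (s y) - (starRingEnd ℂ) (t x) * t y
        + (starRingEnd ℂ) (s x) * s y * Complex.exp (Complex.I * ((N : ℂ) + 1) * ((x : ℂ) - (y : ℂ)))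
        - t x * (starRingEnd ℂ) (t y) * Complex.exp (Complex.I * ((N : ℂ) + 1) * ((x : ℂ) - (y : ℂ))) = 0 := by
  intro x y
  have ce : ∀ (k : ℕ) (u : ℝ),
      (starRingEnd ℂ) (Complex.exp (Complex.I * (k:ℂ) * (u:ℂ))) = Complex.exp (-(Complex.I * (k:ℂ) * (u:ℂ))) := by
    intro k u
    rw [← Complex.exp_conj]; congr 1
    simp [_root_.map_mul, Complex.conj_I, Complex.conj_natCast, Complex.conj_ofReal]
  have ce' : ∀ (k : ℕ) (u : ℝ),
      (starRingEnd ℂ) (Complex.exp (-(Complex.I * (k:ℂ) * (u:ℂ)))) = Complex.exp (Complex.I * (k:ℂ) * (u:ℂ)) := by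
    intro k u
    rw [← Complex.exp_conj]; congr 1
    simp [_root_.map_mul, Complex.conj_I, Complex.conj_natCast, Complex.conj_ofReal]
  have reidx2 : ∀ F : ℕ → ℕ → ℂ,
      ∑ j ∈ Finset.Icc 1 N, ∑ k ∈ Finset.Icc 1 N, F (N+1-j) (N+1-k)
        = ∑ j ∈ Finset.Icc 1 N, ∑ k ∈ Finset.Icc 1 N, F j k := by
    intro F
    calc ∑ j ∈ Finset.Icc 1 N, ∑ k ∈ Finset.Icc 1 N, F (N+1-j) (N+1-k)
        = ∑ j ∈ Finset.Icc 1 N, ∑ k ∈ Finset.Icc 1 N, F (N+1-j) k :=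
          Finset.sum_congr rfl fun j _ => ntti_reidx N (F (N+1-j))
      _ = ∑ j ∈ Finset.Icc 1 N, ∑ k ∈ Finset.Icc 1 N, F j k :=
          ntti_reidx N (fun j => ∑ k ∈ Finset.Icc 1 N, F j k)
  have h1 : s x * (starRingEnd ℂ) (s y)
      = ∑ j ∈ Finset.Icc 1 N, ∑ k ∈ Finset.Icc 1 N,
          a (j:ℤ) * (starRingEnd ℂ) (a (k:ℤ))
            * (Complex.exp (Complex.I * (j:ℂ) * (x:ℂ)) * Complex.exp (-(Complex.I * (k:ℂ) * (y:ℂ)))) := by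
    rw [hs x, hs y, map_sum, Finset.sum_mul_sum]
    refine Finset.sum_congr rfl fun j _ => Finset.sum_congr rfl fun k _ => ?_
    rw [_root_.map_mul, ce]; ring
  have h2 : (starRingEnd ℂ) (t x) * t y
      = ∑ j ∈ Finset.Icc 1 N, ∑ k ∈ Finset.Icc 1 N,
          (starRingEnd ℂ) (a (-(j:ℤ))) * a (-(k:ℤ))
            * (Complex.exp (Complex.I * (j:ℂ) * (x:ℂ)) * Complex.exp (-(Complex.I * (k:ℂ) * (y:ℂ)))) := by
    rw [ht x, ht y, map_sum, Finset.sum_mul_sum]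
    refine Finset.sum_congr rfl fun j _ => Finset.sum_congr rfl fun k _ => ?_
    rw [_root_.map_mul, ce']; ring
  have h3 : (starRingEnd ℂ) (s x) * s y
      = ∑ j ∈ Finset.Icc 1 N, ∑ k ∈ Finset.Icc 1 N,
          (starRingEnd ℂ) (a (j:ℤ)) * a (k:ℤ)
            * (Complex.exp (-(Complex.I * (j:ℂ) * (x:ℂ))) * Complex.exp (Complex.I * (k:ℂ) * (y:ℂ))) := by
    rw [hs x, hs y, map_sum, Finset.sum_mul_sum]
    refine Finset.sum_congr rfl fun j _ => Finset.sum_congr rfl fun k _ => ?_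
    rw [_root_.map_mul, ce]; ring
  have h4 : t x * (starRingEnd ℂ) (t y)
      = ∑ j ∈ Finset.Icc 1 N, ∑ k ∈ Finset.Icc 1 N,
          a (-(j:ℤ)) * (starRingEnd ℂ) (a (-(k:ℤ)))
            * (Complex.exp (-(Complex.I * (j:ℂ) * (x:ℂ))) * Complex.exp (Complex.I * (k:ℂ) * (y:ℂ))) := by
    rw [ht x, ht y, map_sum, Finset.sum_mul_sum]
    refine Finset.sum_congr rfl fun j _ => Finset.sum_congr rfl fun k _ => ?_
    rw [_root_.map_mul, ce']; ring
  have h5 : (starRingEnd ℂ) (s x) * s y * Complex.exp (Complex.I * ((N : ℂ) + 1) * ((x : ℂ) - (y : ℂ)))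
      = ∑ j ∈ Finset.Icc 1 N, ∑ k ∈ Finset.Icc 1 N,
          (starRingEnd ℂ) (a ((N:ℤ) + 1 - j)) * a ((N:ℤ) + 1 - k)
            * (Complex.exp (Complex.I * (j:ℂ) * (x:ℂ)) * Complex.exp (-(Complex.I * (k:ℂ) * (y:ℂ)))) := by
    calc (starRingEnd ℂ) (s x) * s y * Complex.exp (Complex.I * ((N : ℂ) + 1) * ((x : ℂ) - (y : ℂ)))
        = ∑ j ∈ Finset.Icc 1 N, ∑ k ∈ Finset.Icc 1 N,
            (starRingEnd ℂ) (a (j:ℤ)) * a (k:ℤ)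
              * (Complex.exp (-(Complex.I * (j:ℂ) * (x:ℂ))) * Complex.exp (Complex.I * (k:ℂ) * (y:ℂ)))
              * Complex.exp (Complex.I * ((N : ℂ) + 1) * ((x : ℂ) - (y : ℂ))) := by
          rw [h3, Finset.sum_mul]
          exact Finset.sum_congr rfl fun j _ => Finset.sum_mul _ _ _
      _ = ∑ j ∈ Finset.Icc 1 N, ∑ k ∈ Finset.Icc 1 N,
            (starRingEnd ℂ) (a ((N+1-j:ℕ):ℤ)) * a ((N+1-k:ℕ):ℤ)
              * (Complex.exp (-(Complex.I * ((N+1-j:ℕ):ℂ) * (x:ℂ))) * Complex.exp (Complex.I * ((N+1-k:ℕ):ℂ) * (y:ℂ)))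
              * Complex.exp (Complex.I * ((N : ℂ) + 1) * ((x : ℂ) - (y : ℂ))) :=
        (reidx2 (fun p q =>
            (starRingEnd ℂ) (a (p:ℤ)) * a (q:ℤ)
              * (Complex.exp (-(Complex.I * (p:ℂ) * (x:ℂ))) * Complex.exp (Complex.I * (q:ℂ) * (y:ℂ)))
              * Complex.exp (Complex.I * ((N : ℂ) + 1) * ((x : ℂ) - (y : ℂ))))).symm
      _ = _ := by
          refine Finset.sum_congr rfl fun j hj => Finset.sum_congr rfl fun k hk => ?_
          simp only [Finset.mem_Icc] at hj hk
          have c1 : ((N+1-j:ℕ):ℤ) = (N:ℤ) + 1 - j := by omega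
          have d1 : ((N+1-k:ℕ):ℤ) = (N:ℤ) + 1 - k := by omega
          have c2 : ((N+1-j:ℕ):ℂ) = (N:ℂ) + 1 - (j:ℂ) := by
            rw [Nat.cast_sub (by omega : j ≤ N+1)]; push_cast; ring
          have d2 : ((N+1-k:ℕ):ℂ) = (N:ℂ) + 1 - (k:ℂ) := by
            rw [Nat.cast_sub (by omega : k ≤ N+1)]; push_cast; ring
          rw [c1, d1, c2, d2]
          have ex : Complex.exp (-(Complex.I * ((N:ℂ) + 1 - (j:ℂ)) * (x:ℂ)))
                * Complex.exp (Complex.I * ((N:ℂ) + 1 - (k:ℂ)) * (y:ℂ))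
                * Complex.exp (Complex.I * ((N : ℂ) + 1) * ((x : ℂ) - (y : ℂ)))
              = Complex.exp (Complex.I * (j:ℂ) * (x:ℂ)) * Complex.exp (-(Complex.I * (k:ℂ) * (y:ℂ))) := by
            rw [← Complex.exp_add, ← Complex.exp_add, ← Complex.exp_add]; congr 1; ring
          linear_combination ((starRingEnd ℂ) (a ((N:ℤ) + 1 - j)) * a ((N:ℤ) + 1 - k)) * ex
  have h6 : t x * (starRingEnd ℂ) (t y) * Complex.exp (Complex.I * ((N : ℂ) + 1) * ((x : ℂ) - (y : ℂ)))
      = ∑ j ∈ Finset.Icc 1 N, ∑ k ∈ Finset.Icc 1 N,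
          a ((j:ℤ) - 1 - N) * (starRingEnd ℂ) (a ((k:ℤ) - 1 - N))
            * (Complex.exp (Complex.I * (j:ℂ) * (x:ℂ)) * Complex.exp (-(Complex.I * (k:ℂ) * (y:ℂ)))) := by
    calc t x * (starRingEnd ℂ) (t y) * Complex.exp (Complex.I * ((N : ℂ) + 1) * ((x : ℂ) - (y : ℂ)))
        = ∑ j ∈ Finset.Icc 1 N, ∑ k ∈ Finset.Icc 1 N,
            a (-(j:ℤ)) * (starRingEnd ℂ) (a (-(k:ℤ)))
              * (Complex.exp (-(Complex.I * (j:ℂ) * (x:ℂ))) * Complex.exp (Complex.I * (k:ℂ) * (y:ℂ)))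
              * Complex.exp (Complex.I * ((N : ℂ) + 1) * ((x : ℂ) - (y : ℂ))) := by
          rw [h4, Finset.sum_mul]
          exact Finset.sum_congr rfl fun j _ => Finset.sum_mul _ _ _
      _ = ∑ j ∈ Finset.Icc 1 N, ∑ k ∈ Finset.Icc 1 N,
            a (-((N+1-j:ℕ):ℤ)) * (starRingEnd ℂ) (a (-((N+1-k:ℕ):ℤ)))
              * (Complex.exp (-(Complex.I * ((N+1-j:ℕ):ℂ) * (x:ℂ))) * Complex.exp (Complex.I * ((N+1-k:ℕ):ℂ) * (y:ℂ)))
              * Complex.exp (Complex.I * ((N : ℂ) + 1) * ((x : ℂ) - (y : ℂ))) :=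
        (reidx2 (fun p q =>
            a (-(p:ℤ)) * (starRingEnd ℂ) (a (-(q:ℤ)))
              * (Complex.exp (-(Complex.I * (p:ℂ) * (x:ℂ))) * Complex.exp (Complex.I * (q:ℂ) * (y:ℂ)))
              * Complex.exp (Complex.I * ((N : ℂ) + 1) * ((x : ℂ) - (y : ℂ))))).symm
      _ = _ := by
          refine Finset.sum_congr rfl fun j hj => Finset.sum_congr rfl fun k hk => ?_
          simp only [Finset.mem_Icc] at hj hk
          have c1 : -((N+1-j:ℕ):ℤ) = (j:ℤ) - 1 - N := by omega
          have d1 : -((N+1-k:ℕ):ℤ) = (k:ℤ) - 1 - N := by omega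
          have c2 : ((N+1-j:ℕ):ℂ) = (N:ℂ) + 1 - (j:ℂ) := by
            rw [Nat.cast_sub (by omega : j ≤ N+1)]; push_cast; ring
          have d2 : ((N+1-k:ℕ):ℂ) = (N:ℂ) + 1 - (k:ℂ) := by
            rw [Nat.cast_sub (by omega : k ≤ N+1)]; push_cast; ring
          rw [c1, d1, c2, d2]
          have ex : Complex.exp (-(Complex.I * ((N:ℂ) + 1 - (j:ℂ)) * (x:ℂ)))
                * Complex.exp (Complex.I * ((N:ℂ) + 1 - (k:ℂ)) * (y:ℂ))
                * Complex.exp (Complex.I * ((N : ℂ) + 1) * ((x : ℂ) - (y : ℂ)))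
              = Complex.exp (Complex.I * (j:ℂ) * (x:ℂ)) * Complex.exp (-(Complex.I * (k:ℂ) * (y:ℂ))) := by
            rw [← Complex.exp_add, ← Complex.exp_add, ← Complex.exp_add]; congr 1; ring
          linear_combination (a ((j:ℤ) - 1 - N) * (starRingEnd ℂ) (a ((k:ℤ) - 1 - N))) * ex
  have final : ∑ j ∈ Finset.Icc 1 N, ∑ k ∈ Finset.Icc 1 N,
      (a (j:ℤ) * (starRingEnd ℂ) (a (k:ℤ))
          * (Complex.exp (Complex.I * (j:ℂ) * (x:ℂ)) * Complex.exp (-(Complex.I * (k:ℂ) * (y:ℂ))))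
        - (starRingEnd ℂ) (a (-(j:ℤ))) * a (-(k:ℤ))
          * (Complex.exp (Complex.I * (j:ℂ) * (x:ℂ)) * Complex.exp (-(Complex.I * (k:ℂ) * (y:ℂ))))
        + (starRingEnd ℂ) (a ((N:ℤ) + 1 - j)) * a ((N:ℤ) + 1 - k)
          * (Complex.exp (Complex.I * (j:ℂ) * (x:ℂ)) * Complex.exp (-(Complex.I * (k:ℂ) * (y:ℂ))))
        - a ((j:ℤ) - 1 - N) * (starRingEnd ℂ) (a ((k:ℤ) - 1 - N))
          * (Complex.exp (Complex.I * (j:ℂ) * (x:ℂ)) * Complex.exp (-(Complex.I * (k:ℂ) * (y:ℂ))))) = 0 := by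
    refine Finset.sum_eq_zero fun j hj => Finset.sum_eq_zero fun k hk => ?_
    simp only [Finset.mem_Icc] at hj hk
    linear_combination (Complex.exp (Complex.I * (j:ℂ) * (x:ℂ)) * Complex.exp (-(Complex.I * (k:ℂ) * (y:ℂ))))
      * ntti_cor N a T hT hnormal j k hj.1 hj.2 hk.1 hk.2
  rw [h1, h2, h5, h6]
  simp only [← Finset.sum_sub_distrib, ← Finset.sum_add_distrib] at final ⊢
  exact final
end
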